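/- arXiv:2401.05518 — 6 statements merged into one kernel-verified Lean document; each statement's English description precedes it below -/
import Mathlib

section
/- Under the correlated quantization construction, for i ≠ j: E[𝟙{πᵢ/n + γᵢ < a} · 𝟙{πᵢ > πⱼ}] = (1/(2n(n-1)))·(n²a² - na + c_a), where c_a = (na - ⌊na⌋)(⌊na⌋ + 1 - na). -/
open MeasureTheory ProbabilityTheory Finset

section aux
variable {n : ℕ}

-- probability that γ_i lands below c
lemma gamma_prob {Ω : Type*} [MeasurableSpace Ω] (μ : Measure Ω) [IsProbabilityMeasure μ]
    (hn : 2 ≤ n) (γ : Ω → Fin n → ℝ) (hγmeas : ∀ i, Measurable (fun ω => γ ω i))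
    (hγ : ∀ i, Measure.map (fun ω => γ ω i) μ
      = (n : ENNReal) • (volume.restrict (Set.Ico (0 : ℝ) (1 / n)))) (i : Fin n) (c : ℝ) :
    μ {ω | γ ω i < c} = ENNReal.ofReal (max (min ((n:ℝ) * c) 1) 0) := by
  have hnpos : (0:ℝ) < n := by positivity
  have h1 : μ {ω | γ ω i < c} = (Measure.map (fun ω => γ ω i) μ) (Set.Iio c) := by
    rw [Measure.map_apply (hγmeas i) measurableSet_Iio]
    rfl
  rw [h1, hγ i]
  rw [Measure.smul_apply, Measure.restrict_apply measurableSet_Iio]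
  have hset : Set.Iio c ∩ Set.Ico (0:ℝ) (1/n) = Set.Ico 0 (min c (1/n)) := by
    ext y
    simp only [Set.mem_inter_iff, Set.mem_Iio, Set.mem_Ico, lt_min_iff]
    tauto
  rw [hset, Real.volume_Ico]
  have : (n : ENNReal) = ENNReal.ofReal (n:ℝ) := by simp
  rw [this, smul_eq_mul, ← ENNReal.ofReal_mul (le_of_lt hnpos)]
  have hmm : (n:ℝ) * (min c (1/n) - 0) = min ((n:ℝ)*c) 1 := by
    rw [sub_zero, mul_min_of_nonneg _ _ (le_of_lt hnpos)]
    congr 1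
    field_simp
  rw [hmm]
  rcases le_total 0 (min ((n:ℝ)*c) 1) with h | h
  · rw [max_eq_left h]
  · rw [max_eq_right h, ENNReal.ofReal_zero, ENNReal.ofReal_eq_zero]
    exact h
open Finset

lemma fiber_card_eq {n : ℕ} (i j : Fin n) (k l k' l' : Fin n) (hkl : k ≠ l) (h' : k' ≠ l') :
    (univ.filter fun σ : Equiv.Perm (Fin n) => σ i = k ∧ σ j = l).card
      = (univ.filter fun σ : Equiv.Perm (Fin n) => σ i = k' ∧ σ j = l').card := by
  have hρ : ∃ ρ : Equiv.Perm (Fin n), ρ k = k' ∧ ρ l = l' := by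
    refine ⟨(Equiv.swap (Equiv.swap k k' l) l') * (Equiv.swap k k'), ?_, ?_⟩
    · simp only [Equiv.Perm.mul_apply, Equiv.swap_apply_left]
      apply Equiv.swap_apply_of_ne_of_ne
      · intro h
        exact hkl ((Equiv.swap k k').injective (by rw [Equiv.swap_apply_left]; exact h))
      · exact h'
    · simp only [Equiv.Perm.mul_apply, Equiv.swap_apply_left]
  obtain ⟨ρ, hρk, hρl⟩ := hρ
  apply Finset.card_bij' (fun σ _ => ρ * σ) (fun σ _ => ρ⁻¹ * σ)
  · intro σ hσ
    simp only [mem_filter, mem_univ, true_and] at hσ ⊢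
    simp [Equiv.Perm.mul_apply, hσ.1, hσ.2, hρk, hρl]
  · intro σ hσ
    simp only [mem_filter, mem_univ, true_and] at hσ ⊢
    constructor
    · rw [Equiv.Perm.mul_apply, hσ.1, ← hρk]; simp
    · rw [Equiv.Perm.mul_apply, hσ.2, ← hρl]; simp
  · intro σ _; simp [mul_assoc]
  · intro σ _; simp [← mul_assoc]

lemma perm_sum {n : ℕ} (hn : 2 ≤ n) (i j : Fin n) (hij : i ≠ j) (w : Fin n → ℝ) :
    ∑ σ : Equiv.Perm (Fin n), (if σ j < σ i then w (σ i) else 0)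
      = (n.factorial : ℝ) / (n * (n - 1)) * ∑ k : Fin n, (k : ℕ) * w k := by
  classical
  set F : Fin n × Fin n → ℝ := fun p => if p.2 < p.1 then w p.1 else 0 with hF
  have hfib : ∑ σ : Equiv.Perm (Fin n), (if σ j < σ i then w (σ i) else 0)
      = ∑ p : Fin n × Fin n, ∑ σ ∈ univ.filter (fun σ : Equiv.Perm (Fin n) => (σ i, σ j) = p),
          F (σ i, σ j) := by
    rw [Finset.sum_fiberwise_of_maps_to (fun σ _ => mem_univ _)]
  have hconst : ∀ p : Fin n × Fin n,
      (∑ σ ∈ univ.filter (fun σ : Equiv.Perm (Fin n) => (σ i, σ j) = p), F (σ i, σ j))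
        = ((univ.filter (fun σ : Equiv.Perm (Fin n) => σ i = p.1 ∧ σ j = p.2)).card : ℝ) * F p := by
    intro p
    have hfe : (univ.filter (fun σ : Equiv.Perm (Fin n) => (σ i, σ j) = p))
        = (univ.filter (fun σ : Equiv.Perm (Fin n) => σ i = p.1 ∧ σ j = p.2)) := by
      apply Finset.filter_congr; intro σ _; simp [Prod.ext_iff]
    rw [hfe, Finset.sum_congr rfl (fun σ hσ => by
      simp only [mem_filter, mem_univ, true_and] at hσ
      rw [hσ.1, hσ.2]), Finset.sum_const, nsmul_eq_mul]
  obtain ⟨k₀, l₀, hk₀l₀⟩ : ∃ k₀ l₀ : Fin n, k₀ ≠ l₀ := by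
    refine ⟨⟨0, by omega⟩, ⟨1, by omega⟩, by simp [Fin.ext_iff]⟩
  set C : ℕ := (univ.filter (fun σ : Equiv.Perm (Fin n) => σ i = k₀ ∧ σ j = l₀)).card with hC
  have hcard : ∀ p : Fin n × Fin n,
      ((univ.filter (fun σ : Equiv.Perm (Fin n) => σ i = p.1 ∧ σ j = p.2)).card : ℝ) * F p
        = (C : ℝ) * F p := by
    intro p
    by_cases hp : p.1 = p.2
    · have : F p = 0 := by simp [hF, hp, lt_irrefl]
      simp [this]
    · rw [fiber_card_eq i j p.1 p.2 k₀ l₀ hp hk₀l₀]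
  have h2 : ∀ p : Fin n × Fin n,
      (univ.filter (fun σ : Equiv.Perm (Fin n) => (σ i, σ j) = p)).card
        = if p.1 = p.2 then 0 else C := by
    intro p
    have hfe : (univ.filter (fun σ : Equiv.Perm (Fin n) => (σ i, σ j) = p))
        = (univ.filter (fun σ : Equiv.Perm (Fin n) => σ i = p.1 ∧ σ j = p.2)) := by
      apply Finset.filter_congr; intro σ _; simp [Prod.ext_iff]
    rw [hfe]
    by_cases hp : p.1 = p.2
    · rw [if_pos hp, Finset.card_eq_zero, Finset.filter_eq_empty_iff]
      intro σ _
      rintro ⟨h1', h2'⟩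
      exact hij (σ.injective (h1'.trans (hp.trans h2'.symm)))
    · rw [if_neg hp]
      exact fiber_card_eq i j p.1 p.2 k₀ l₀ hp hk₀l₀
  -- total count: n! = n (n-1) C (over ℝ)
  have htot : (n.factorial : ℝ) = (n : ℝ) * ((n : ℝ) - 1) * C := by
    have h1 : (univ : Finset (Equiv.Perm (Fin n))).card
        = ∑ p : Fin n × Fin n,
            (univ.filter (fun σ : Equiv.Perm (Fin n) => (σ i, σ j) = p)).card :=
      Finset.card_eq_sum_card_fiberwise (fun σ _ => mem_univ _)
    have h3 : (univ : Finset (Equiv.Perm (Fin n))).card = n.factorial := by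
      simp [Finset.card_univ, Fintype.card_perm]
    have h1R : (n.factorial : ℝ)
        = ∑ p : Fin n × Fin n, (if p.1 = p.2 then (0:ℝ) else (C:ℝ)) := by
      rw [← h3]
      rw [Finset.sum_congr rfl (fun p _ => by
        rw [← (by split <;> simp : (((if p.1 = p.2 then 0 else C : ℕ)):ℝ) = if p.1 = p.2 then (0:ℝ) else (C:ℝ)), ← h2 p])]
      rw [← Nat.cast_sum]
      exact_mod_cast congrArg (Nat.cast : ℕ → ℝ) h1
    rw [h1R, Fintype.sum_prod_type]
    have hk : ∀ k : Fin n, ∑ l : Fin n, (if k = l then (0:ℝ) else (C:ℝ)) = ((n:ℝ) - 1) * C := by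
      intro k
      have h := Finset.sum_ite_eq (univ : Finset (Fin n)) k (fun _ => (C:ℝ))
      simp only [mem_univ, if_true] at h
      have h2' : ∑ l : Fin n, ((if k = l then (0:ℝ) else (C:ℝ)) + (if k = l then (C:ℝ) else 0))
          = (n:ℝ) * C := by
        rw [Finset.sum_congr rfl (fun l _ => by split <;> ring)]
        simp [Finset.card_univ, mul_comm]
      rw [Finset.sum_add_distrib, h] at h2'
      linarith
    rw [Finset.sum_congr rfl (fun k _ => hk k)]
    simp [Finset.card_univ, mul_comm]
    ring
  -- assemble
  have hsum : ∑ σ : Equiv.Perm (Fin n), (if σ j < σ i then w (σ i) else 0)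
      = (C : ℝ) * ∑ k : Fin n, (k : ℕ) * w k := by
    rw [hfib, Finset.sum_congr rfl (fun p _ => (hconst p).trans (hcard p)), ← Finset.mul_sum]
    congr 1
    rw [Fintype.sum_prod_type]
    apply Finset.sum_congr rfl
    intro k _
    have : ∑ l : Fin n, F (k, l) = (∑ l : Fin n, (if l < k then (1:ℝ) else 0)) * w k := by
      rw [Finset.sum_mul]
      apply Finset.sum_congr rfl
      intro l _
      simp only [hF]
      split <;> ring
    rw [this]
    congr 1
    rw [Finset.sum_boole]
    have : univ.filter (· < k) = Finset.Iio k := by ext x; simp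
    rw [this, Fin.card_Iio]
  rw [hsum]
  have hne : (n : ℝ) * ((n:ℝ) - 1) ≠ 0 := by
    have : (2:ℝ) ≤ n := by exact_mod_cast hn
    nlinarith
  rw [htot]
  field_simp
  have hn1' : (n:ℝ) - 1 ≠ 0 := by
    have : (2:ℝ) ≤ n := by exact_mod_cast hn
    linarith
  exact (mul_div_cancel_right₀ _ hn1').symm
open Finset

lemma sum_range_id_real (m : ℕ) : ∑ k ∈ Finset.range m, (k:ℝ) = m*(m-1)/2 := by
  induction m with
  | zero => simp
  | succ m ih => rw [Finset.sum_range_succ, ih]; push_cast; ring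

lemma sum_clamp (n : ℕ) (x : ℝ) (hx0 : 0 ≤ x) (hxn : x ≤ n) :
    ∑ k ∈ Finset.range n, (k : ℝ) * (max (min (x - k) 1) 0)
      = (⌊x⌋ : ℝ) * ((⌊x⌋ : ℝ) - 1) / 2 + (⌊x⌋ : ℝ) * (x - ⌊x⌋) := by
  set m : ℕ := ⌊x⌋.toNat with hm
  have hfl : (0:ℤ) ≤ ⌊x⌋ := Int.floor_nonneg.mpr hx0
  have hmx : ((⌊x⌋ : ℝ)) = (m : ℝ) := by rw [hm]; exact_mod_cast congrArg (Int.cast : ℤ → ℝ) (Int.toNat_of_nonneg hfl).symm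
  have hml : (m : ℝ) ≤ x := by rw [← hmx]; exact Int.floor_le x
  have hmu : x < (m : ℝ) + 1 := by rw [← hmx]; exact Int.lt_floor_add_one x
  have hmn : m ≤ n := by
    by_contra h
    push_neg at h
    have : (n : ℝ) + 1 ≤ (m : ℝ) := by exact_mod_cast h
    linarith
  rw [hmx]
  by_cases hcase : m = n
  · -- x = n, all terms are 1
    have hx : x = (n : ℝ) := le_antisymm hxn (by rw [← hcase]; exact hml)
    have : ∀ k ∈ Finset.range n, (k : ℝ) * (max (min (x - k) 1) 0) = (k:ℝ) := by
      intro k hk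
      rw [Finset.mem_range] at hk
      have h1 : (1:ℝ) ≤ x - k := by
        have : (k:ℝ) + 1 ≤ n := by exact_mod_cast hk
        rw [hx]; linarith
      rw [min_eq_right h1, max_eq_left zero_le_one, mul_one]
    rw [Finset.sum_congr rfl this, sum_range_id_real, hcase, hx]
    ring
  · have hmn' : m < n := lt_of_le_of_ne hmn hcase
    rw [← Finset.sum_range_add_sum_Ico _ (Nat.succ_le_of_lt hmn')]
    have hico : ∑ k ∈ Finset.Ico (m+1) n, (k : ℝ) * (max (min (x - k) 1) 0) = 0 := by
      apply Finset.sum_eq_zero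
      intro k hk
      rw [Finset.mem_Ico] at hk
      have : x - k ≤ 0 := by
        have : (m:ℝ) + 1 ≤ k := by exact_mod_cast hk.1
        linarith
      have : max (min (x - k) 1) 0 = 0 := by
        rw [max_eq_right]
        exact le_trans (min_le_left _ _) this
      rw [this, mul_zero]
    rw [hico, add_zero, Finset.sum_range_succ]
    have hgm : max (min (x - m) 1) 0 = x - m := by
      rw [min_eq_left (by linarith), max_eq_left (by linarith)]
    have hrest : ∀ k ∈ Finset.range m, (k : ℝ) * (max (min (x - k) 1) 0) = (k:ℝ) := by
      intro k hk
      rw [Finset.mem_range] at hk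
      have h1 : (1:ℝ) ≤ x - k := by
        have : (k:ℝ) + 1 ≤ m := by exact_mod_cast hk
        linarith
      rw [min_eq_right h1, max_eq_left zero_le_one, mul_one]
    rw [Finset.sum_congr rfl hrest, sum_range_id_real, hgm]


/-- in the correlated quantization construction, for `i ≠ j`,
`E[𝟙{π i/n + γ i < a} ⬝ 𝟙{π i > π j}] = (1/(2 n (n-1))) (n² a² - n a + c_a)`,
where `c_a = (na - ⌊na⌋)(⌊na⌋ + 1 - na)`. -/
theorem correlated_quantizer_cross_term (n : ℕ) (hn : 2 ≤ n) (a : ℝ)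
    (ha : a ∈ Set.Icc (0 : ℝ) 1)
    {Ω : Type*} [MeasurableSpace Ω] (μ : Measure Ω) [IsProbabilityMeasure μ]
    (π : Ω → Fin n → Fin n) (hbij : ∀ ω, Function.Bijective (π ω))
    (γ : Ω → Fin n → ℝ)
    (hπmeas : Measurable π) (hγmeas : ∀ i, Measurable (fun ω => γ ω i))
    (hπ : ∀ σ : Equiv.Perm (Fin n), μ {ω | π ω = ⇑σ} = ((n.factorial : ENNReal))⁻¹)
    (hγ : ∀ i, Measure.map (fun ω => γ ω i) μ
      = (n : ENNReal) • (volume.restrict (Set.Ico (0 : ℝ) (1 / n))))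
    (hindep : ∀ (σ : Equiv.Perm (Fin n)) (s : Fin n → Set ℝ),
      (∀ i, MeasurableSet (s i)) →
      μ ({ω | π ω = ⇑σ} ∩ {ω | ∀ i, γ ω i ∈ s i})
        = μ {ω | π ω = ⇑σ} * ∏ i, μ {ω | γ ω i ∈ s i})
    (i j : Fin n) (hij : i ≠ j) :
    (μ {ω | ((π ω i : ℕ) : ℝ) / n + γ ω i < a ∧ π ω j < π ω i}).toReal
      = (1 / (2 * n * (n - 1 : ℝ)))
        * ((n : ℝ) ^ 2 * a ^ 2 - n * a
            + ((n : ℝ) * a - ⌊(n : ℝ) * a⌋) * ((⌊(n : ℝ) * a⌋ : ℝ) + 1 - (n : ℝ) * a)) := by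
  classical
  obtain ⟨ha0, ha1⟩ := ha
  have hnpos : (0:ℝ) < n := by positivity
  set g : Fin n → ℝ := fun k => max (min ((n:ℝ) * a - (k:ℕ)) 1) 0 with hg
  set c : Fin n → ℝ := fun k => a - ((k:ℕ):ℝ) / n with hc
  -- measure of {π = σ} ∩ {γ i < c (σ i)}
  have hB : ∀ σ : Equiv.Perm (Fin n),
      μ ({ω | π ω = ⇑σ} ∩ {ω | γ ω i < c (σ i)})
        = ((n.factorial : ENNReal))⁻¹ * ENNReal.ofReal (g (σ i)) := by
    intro σ
    set s : Fin n → Set ℝ := fun i' => if i' = i then Set.Iio (c (σ i)) else Set.univ with hs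
    have hsm : ∀ i', MeasurableSet (s i') := by
      intro i'
      by_cases h' : i' = i
      · simp only [hs, h', if_pos rfl]
        exact measurableSet_Iio
      · simp only [hs, if_neg h']
        exact MeasurableSet.univ
    have hseq : {ω | ∀ i', γ ω i' ∈ s i'} = {ω | γ ω i < c (σ i)} := by
      ext ω
      simp only [Set.mem_setOf_eq]
      constructor
      · intro h
        have := h i
        rw [hs] at this
        simpa using this
      · intro h i'
        rw [hs]
        by_cases h' : i' = i
        · subst h'; simpa using h
        · simp [h']
    have hprod : ∏ i', μ {ω | γ ω i' ∈ s i'} = μ {ω | γ ω i < c (σ i)} := by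
      rw [Finset.prod_eq_single_of_mem i (Finset.mem_univ i)]
      · congr 1
        ext ω
        simp [hs]
      · intro b _ hb
        have : s b = Set.univ := by rw [hs]; simp [hb]
        rw [this]
        simp
    have := hindep σ s hsm
    rw [hseq, hprod, hπ σ] at this
    rw [this]
    congr 1
    rw [gamma_prob μ hn γ hγmeas hγ i (c (σ i))]
    have harg : (n:ℝ) * (c (σ i)) = (n:ℝ)*a - ((σ i : ℕ):ℝ) := by
      simp only [hc]; field_simp
    rw [harg]
  -- decomposition of the event
  set A : Equiv.Perm (Fin n) → Set Ω := fun σ =>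
    if σ j < σ i then ({ω | π ω = ⇑σ} ∩ {ω | γ ω i < c (σ i)}) else ∅ with hA
  have hEA : {ω | ((π ω i : ℕ) : ℝ) / n + γ ω i < a ∧ π ω j < π ω i} = ⋃ σ, A σ := by
    ext ω
    simp only [Set.mem_setOf_eq, Set.mem_iUnion]
    constructor
    · rintro ⟨h1, h2⟩
      refine ⟨Equiv.ofBijective (π ω) (hbij ω), ?_⟩
      have hσ : π ω = ⇑(Equiv.ofBijective (π ω) (hbij ω)) := rfl
      simp only [hA]
      simp only [← hσ]
      rw [if_pos h2]
      refine ⟨hσ, ?_⟩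
      rw [hc]
      simp only [Set.mem_setOf_eq]
      linarith
    · rintro ⟨σ, hσ⟩
      simp only [hA] at hσ
      by_cases hlt : σ j < σ i
      · rw [if_pos hlt] at hσ
        obtain ⟨h1, h2⟩ := hσ
        simp only [Set.mem_setOf_eq] at h1 h2
        rw [h1]
        rw [hc] at h2
        constructor
        · linarith
        · exact hlt
      · rw [if_neg hlt] at hσ
        exact absurd hσ (Set.notMem_empty ω)
  have hAmeas : ∀ σ, MeasurableSet (A σ) := by
    intro σ
    simp only [hA]
    split
    · apply MeasurableSet.inter
      · exact hπmeas (MeasurableSet.singleton ⇑σ)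
      · exact (hγmeas i) measurableSet_Iio
    · exact MeasurableSet.empty
  have hAdisj : Pairwise (Function.onFun Disjoint A) := by
    intro σ σ' hσσ'
    rw [Function.onFun, Set.disjoint_left]
    intro ω h1 h2
    simp only [hA] at h1 h2
    by_cases hl1 : σ j < σ i
    · rw [if_pos hl1] at h1
      by_cases hl2 : σ' j < σ' i
      · rw [if_pos hl2] at h2
        exact hσσ' (Equiv.coe_fn_injective (h1.1.symm.trans h2.1))
      · rw [if_neg hl2] at h2; exact h2
    · rw [if_neg hl1] at h1
      exact h1
  have hμE : μ {ω | ((π ω i : ℕ) : ℝ) / n + γ ω i < a ∧ π ω j < π ω i}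
      = ∑ σ : Equiv.Perm (Fin n),
          (if σ j < σ i then ((n.factorial : ENNReal))⁻¹ * ENNReal.ofReal (g (σ i)) else 0) := by
    rw [hEA, measure_iUnion hAdisj hAmeas, tsum_fintype]
    apply Finset.sum_congr rfl
    intro σ _
    simp only [hA]
    split
    · exact hB σ
    · exact measure_empty
  have hfin : ∀ σ ∈ (Finset.univ : Finset (Equiv.Perm (Fin n))),
      (if σ j < σ i then ((n.factorial : ENNReal))⁻¹ * ENNReal.ofReal (g (σ i)) else 0) ≠ ⊤ := by
    intro σ _
    split
    · apply ENNReal.mul_ne_top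
      · exact ENNReal.inv_ne_top.mpr (by exact_mod_cast Nat.factorial_ne_zero n)
      · exact ENNReal.ofReal_ne_top
    · exact ENNReal.zero_ne_top
  rw [hμE, ENNReal.toReal_sum hfin]
  have hterm : ∀ σ : Equiv.Perm (Fin n),
      (if σ j < σ i then ((n.factorial : ENNReal))⁻¹ * ENNReal.ofReal (g (σ i)) else 0).toReal
        = if σ j < σ i then ((n.factorial : ℝ))⁻¹ * g (σ i) else 0 := by
    intro σ
    split
    · rw [ENNReal.toReal_mul, ENNReal.toReal_inv, ENNReal.toReal_natCast,
        ENNReal.toReal_ofReal (le_max_right _ _)]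
    · exact ENNReal.toReal_zero
  rw [Finset.sum_congr rfl (fun σ _ => hterm σ)]
  rw [perm_sum hn i j hij (fun k => ((n.factorial : ℝ))⁻¹ * g k)]
  have hfsum : ∑ k : Fin n, ((k:ℕ):ℝ) * (((n.factorial : ℝ))⁻¹ * g k)
      = ((n.factorial : ℝ))⁻¹ * ∑ k ∈ Finset.range n,
          (k : ℝ) * (max (min ((n:ℝ) * a - k) 1) 0) := by
    rw [Finset.mul_sum]
    rw [← Fin.sum_univ_eq_sum_range
      (fun k : ℕ => ((n.factorial : ℝ))⁻¹ * ((k:ℝ) * (max (min ((n:ℝ) * a - k) 1) 0))) n]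
    apply Finset.sum_congr rfl
    intro k _
    simp only [hg]
    ring
  rw [hfsum, sum_clamp n ((n:ℝ)*a) (by positivity) (by nlinarith)]
  have hfac : (n.factorial : ℝ) ≠ 0 := by exact_mod_cast Nat.factorial_ne_zero n
  have hn1 : (n:ℝ) - 1 ≠ 0 := by
    have : (2:ℝ) ≤ n := by exact_mod_cast hn
    linarith
  field_simp
  ring
end aux
end

section
/- For the correlated quantizers Qᵢ(a) = 𝟙{πᵢ/n + γᵢ < a} with i ≠ j and a ∈ [0,1], E[Qᵢ(a)Qⱼ(a)] - a² = (1/(n(n-1)))·(-na(1-a) + c_a), where c_a = (na - ⌊na⌋)(⌊na⌋ + 1 - na). -/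
open MeasureTheory ProbabilityTheory

noncomputable def cqclamp (x : ℝ) : ℝ := max (min x 1) 0

lemma cqclamp_of_nonpos {x : ℝ} (h : x ≤ 0) : cqclamp x = 0 := by
  unfold cqclamp
  rw [max_eq_right]
  exact le_trans (min_le_left _ _) h

lemma cqclamp_of_one_le {x : ℝ} (h : 1 ≤ x) : cqclamp x = 1 := by
  unfold cqclamp
  rw [min_eq_right h, max_eq_left zero_le_one]

lemma cqclamp_of_mem {x : ℝ} (h0 : 0 ≤ x) (h1 : x ≤ 1) : cqclamp x = x := by
  unfold cqclamp
  rw [min_eq_left h1, max_eq_left h0]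

lemma sum_cqclamp (n : ℕ) (x : ℝ) (h0 : 0 ≤ x) (h1 : x ≤ n) :
    ∑ k ∈ Finset.range n, cqclamp (x - k) = x := by
  induction n generalizing x with
  | zero => simp at h1; simp [le_antisymm h1 h0]
  | succ n ih =>
    rw [Finset.sum_range_succ']
    rcases le_or_gt x 1 with hx | hx
    · have : ∀ k ∈ Finset.range n, cqclamp (x - (k+1 : ℕ)) = 0 := by
        intro k _
        apply cqclamp_of_nonpos
        push_cast
        have : (0:ℝ) ≤ k := Nat.cast_nonneg k
        linarith
      rw [Finset.sum_congr rfl this]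
      simp [cqclamp_of_mem h0 hx]
    · have h1' : x - 1 ≤ n := by push_cast at h1; linarith
      have := ih (x - 1) (by linarith) h1'
      have hre : ∀ k ∈ Finset.range n, cqclamp (x - (k+1 : ℕ)) = cqclamp ((x-1) - k) := by
        intro k _; congr 1; push_cast; ring
      rw [Finset.sum_congr rfl hre, this]
      simp only [Nat.cast_zero, sub_zero]
      rw [cqclamp_of_one_le hx.le]; ring

lemma sum_cqclamp_sq (n : ℕ) (x : ℝ) (h0 : 0 ≤ x) (h1 : x ≤ n) :
    ∑ k ∈ Finset.range n, cqclamp (x - k) ^ 2 = (⌊x⌋ : ℝ) + (x - ⌊x⌋) ^ 2 := by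
  induction n generalizing x with
  | zero =>
    simp at h1
    have : x = 0 := le_antisymm h1 h0
    simp [this]
  | succ n ih =>
    rw [Finset.sum_range_succ']
    rcases lt_or_ge x 1 with hx | hx
    · have : ∀ k ∈ Finset.range n, cqclamp (x - (k+1 : ℕ)) ^ 2 = 0 := by
        intro k _
        have : (0:ℝ) ≤ k := Nat.cast_nonneg k
        rw [cqclamp_of_nonpos (by push_cast; linarith)]; ring
      rw [Finset.sum_congr rfl this]
      have hfl : ⌊x⌋ = 0 := Int.floor_eq_zero_iff.2 ⟨h0, hx⟩
      simp [cqclamp_of_mem h0 hx.le, hfl]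
    · have h1' : x - 1 ≤ n := by push_cast at h1; linarith
      have := ih (x - 1) (by linarith) h1'
      have hre : ∀ k ∈ Finset.range n, cqclamp (x - (k+1 : ℕ)) ^ 2 = cqclamp ((x-1) - k) ^ 2 := by
        intro k _; congr 2; push_cast; ring
      rw [Finset.sum_congr rfl hre, this]
      have hfl : ⌊x - 1⌋ = ⌊x⌋ - 1 := by
        have := Int.floor_sub_intCast x 1
        simpa using this
      rw [hfl]
      push_cast
      simp only [Nat.cast_zero, sub_zero]
      rw [cqclamp_of_one_le hx]
      ring

lemma exists_perm_map_pair {n : ℕ} {k l k' l' : Fin n} (hkl : k ≠ l) (hkl' : k' ≠ l') :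
    ∃ τ : Equiv.Perm (Fin n), τ k = k' ∧ τ l = l' := by
  have hA : Equiv.swap k k' l ≠ k' := by
    intro h
    have := congrArg (Equiv.swap k k') h
    rw [Equiv.swap_apply_self, Equiv.swap_apply_right] at this
    exact hkl this.symm
  refine ⟨(Equiv.swap (Equiv.swap k k' l) l') * Equiv.swap k k', ?_, ?_⟩
  · simp only [Equiv.Perm.mul_apply, Equiv.swap_apply_left]
    exact Equiv.swap_apply_of_ne_of_ne hA.symm hkl'
  · simp only [Equiv.Perm.mul_apply]
    exact Equiv.swap_apply_left _ _

lemma card_fiber_eq {n : ℕ} (i j : Fin n) {k l k' l' : Fin n}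
    (hkl : k ≠ l) (hkl' : k' ≠ l') :
    (Finset.univ.filter fun σ : Equiv.Perm (Fin n) => σ i = k ∧ σ j = l).card
      = (Finset.univ.filter fun σ : Equiv.Perm (Fin n) => σ i = k' ∧ σ j = l').card := by
  obtain ⟨τ, hk, hl⟩ := exists_perm_map_pair hkl hkl'
  apply Finset.card_bij' (fun σ _ => τ * σ) (fun σ _ => τ⁻¹ * σ)
  · intro σ hσ
    simp only [Finset.mem_filter, Finset.mem_univ, true_and] at hσ ⊢
    simp [hσ.1, hσ.2, hk, hl]
  · intro σ hσ
    simp only [Finset.mem_filter, Finset.mem_univ, true_and] at hσ ⊢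
    simp [hσ.1, hσ.2, ← hk, ← hl]
  · intro σ _; simp [← mul_assoc]
  · intro σ _; simp [← mul_assoc]

lemma perm_sum_eq {n : ℕ} (i j : Fin n) (hij : i ≠ j) (f : Fin n → Fin n → ℝ) :
    ∑ σ : Equiv.Perm (Fin n), f (σ i) (σ j)
      = ∑ kl ∈ (Finset.univ : Finset (Fin n)).offDiag,
          ((Finset.univ.filter fun σ : Equiv.Perm (Fin n) => σ i = kl.1 ∧ σ j = kl.2).card : ℝ)
            * f kl.1 kl.2 := by
  have hmaps : ∀ σ : Equiv.Perm (Fin n), σ ∈ (Finset.univ : Finset (Equiv.Perm (Fin n))) →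
      (σ i, σ j) ∈ (Finset.univ : Finset (Fin n)).offDiag := by
    intro σ _
    simp [Finset.mem_offDiag, hij]
  rw [← Finset.sum_fiberwise_of_maps_to hmaps (fun σ => f (σ i) (σ j))]
  apply Finset.sum_congr rfl
  intro kl _
  have h1 : ∀ σ ∈ Finset.univ.filter (fun σ : Equiv.Perm (Fin n) => (σ i, σ j) = kl),
      f (σ i) (σ j) = f kl.1 kl.2 := by
    intro σ hσ
    simp only [Finset.mem_filter] at hσ
    rw [← hσ.2]
  rw [Finset.sum_congr rfl h1, Finset.sum_const, nsmul_eq_mul]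
  congr 2
  apply congrArg
  apply Finset.filter_congr
  intro σ _
  simp [Prod.ext_iff]

lemma perm_sum_final {n : ℕ} (i j : Fin n) (hij : i ≠ j) (p : Fin n → ℝ) :
    ∑ σ : Equiv.Perm (Fin n), p (σ i) * p (σ j)
      = ((n.factorial : ℝ) / ((n:ℝ) * ((n:ℝ)-1))) * ((∑ k, p k)^2 - ∑ k, p k ^ 2) := by
  set c0 : ℕ := (Finset.univ.filter fun σ : Equiv.Perm (Fin n) => σ i = i ∧ σ j = j).card with hc0
  have hcard : ∀ kl ∈ (Finset.univ : Finset (Fin n)).offDiag,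
      ((Finset.univ.filter fun σ : Equiv.Perm (Fin n) => σ i = kl.1 ∧ σ j = kl.2).card) = c0 := by
    intro kl hkl
    rw [Finset.mem_offDiag] at hkl
    exact card_fiber_eq i j hkl.2.2 hij
  have key : ∀ f : Fin n → Fin n → ℝ,
      ∑ σ : Equiv.Perm (Fin n), f (σ i) (σ j)
        = (c0:ℝ) * ∑ kl ∈ (Finset.univ : Finset (Fin n)).offDiag, f kl.1 kl.2 := by
    intro f
    rw [perm_sum_eq i j hij f, Finset.mul_sum]
    refine Finset.sum_congr rfl fun kl hkl => ?_
    rw [hcard kl hkl]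
  have hn2 : 2 ≤ n := by
    by_contra h
    push_neg at h
    have hs : Subsingleton (Fin n) := Fin.subsingleton_iff_le_one.mpr (by omega)
    exact hij (Subsingleton.elim i j)
  have hnn : n ≤ n * n := Nat.le_mul_of_pos_left n (by omega)
  have h1 : (n.factorial : ℝ) = (c0:ℝ) * ((n:ℝ) * ((n:ℝ)-1)) := by
    have hk := key (fun _ _ => (1:ℝ))
    simp only [Finset.sum_const, Finset.card_univ, nsmul_eq_mul, mul_one] at hk
    rw [Fintype.card_perm, Fintype.card_fin, Finset.offDiag_card, Finset.card_univ,
      Fintype.card_fin] at hk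
    rw [hk, Nat.cast_sub hnn]
    push_cast
    ring
  have hoff : ∑ kl ∈ (Finset.univ : Finset (Fin n)).offDiag, p kl.1 * p kl.2
      = (∑ k, p k)^2 - ∑ k, p k^2 := by
    have hunion : (Finset.univ : Finset (Fin n)).diag ∪ Finset.univ.offDiag
        = Finset.univ ×ˢ Finset.univ := Finset.diag_union_offDiag _
    have hdisj := Finset.disjoint_diag_offDiag (Finset.univ : Finset (Fin n))
    have hsum := Finset.sum_union (f := fun kl : Fin n × Fin n => p kl.1 * p kl.2) hdisj
    rw [hunion] at hsum
    have hprod : ∑ kl ∈ (Finset.univ : Finset (Fin n)) ×ˢ Finset.univ, p kl.1 * p kl.2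
        = (∑ k, p k)^2 := by
      rw [Finset.sum_product, sq, Finset.sum_mul_sum]
    have hdiag : ∑ kl ∈ (Finset.univ : Finset (Fin n)).diag, p kl.1 * p kl.2
        = ∑ k, p k^2 := by
      rw [Finset.sum_diag]
      exact Finset.sum_congr rfl fun k _ => (sq (p k)).symm
    rw [hprod, hdiag] at hsum
    linarith
  have hden : ((n:ℝ) * ((n:ℝ)-1)) ≠ 0 := by
    have : (2:ℝ) ≤ (n:ℝ) := by exact_mod_cast hn2
    intro h
    rcases mul_eq_zero.1 h with h' | h' <;> linarith
  rw [key (fun k l => p k * p l), hoff, h1]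
  have hn1 : (n:ℝ) - 1 ≠ 0 := by
    have : (2:ℝ) ≤ (n:ℝ) := by exact_mod_cast hn2
    linarith
  field_simp


/-- for the correlated quantizers `Q i = 𝟙{π i/n + γ i < a}` and `i ≠ j`,
`E[Q i Q j] - a² = (1/(n(n-1)))(-n a (1-a) + c_a)` where
`c_a = (na - ⌊na⌋)(⌊na⌋ + 1 - na)`. -/
theorem correlated_quantizer_covariance (n : ℕ) (hn : 2 ≤ n) (a : ℝ)
    (ha : a ∈ Set.Icc (0 : ℝ) 1)
    {Ω : Type*} [MeasurableSpace Ω] (μ : Measure Ω) [IsProbabilityMeasure μ]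
    (π : Ω → Fin n → Fin n) (hbij : ∀ ω, Function.Bijective (π ω))
    (γ : Ω → Fin n → ℝ)
    (hπmeas : Measurable π) (hγmeas : ∀ i, Measurable (fun ω => γ ω i))
    (hπ : ∀ σ : Equiv.Perm (Fin n), μ {ω | π ω = ⇑σ} = ((n.factorial : ENNReal))⁻¹)
    (hγ : ∀ i, Measure.map (fun ω => γ ω i) μ
      = (n : ENNReal) • (volume.restrict (Set.Ico (0 : ℝ) (1 / n))))
    (hindep : ∀ (σ : Equiv.Perm (Fin n)) (s : Fin n → Set ℝ),
      (∀ i, MeasurableSet (s i)) →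
      μ ({ω | π ω = ⇑σ} ∩ {ω | ∀ i, γ ω i ∈ s i})
        = μ {ω | π ω = ⇑σ} * ∏ i, μ {ω | γ ω i ∈ s i})
    (i j : Fin n) (hij : i ≠ j) :
    (μ {ω | ((π ω i : ℕ) : ℝ) / n + γ ω i < a ∧ ((π ω j : ℕ) : ℝ) / n + γ ω j < a}).toReal
        - a ^ 2
      = (1 / ((n : ℝ) * (n - 1 : ℝ)))
        * (-((n : ℝ) * a * (1 - a))
            + ((n : ℝ) * a - ⌊(n : ℝ) * a⌋) * ((⌊(n : ℝ) * a⌋ : ℝ) + 1 - (n : ℝ) * a)) := by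
  classical
  obtain ⟨ha0, ha1⟩ := ha
  have hn0 : (n:ℝ) ≠ 0 := Nat.cast_ne_zero.2 (by omega)
  have hnpos : (0:ℝ) < n := by positivity
  -- distribution of each γ coordinate
  have hγdist : ∀ (k : Fin n) (t : ℝ), μ {ω | γ ω k < t}
      = ENNReal.ofReal (min ((n:ℝ) * t) 1) := by
    intro k t
    have hpre : {ω | γ ω k < t} = (fun ω => γ ω k) ⁻¹' (Set.Iio t) := rfl
    rw [hpre, ← Measure.map_apply (hγmeas k) measurableSet_Iio, hγ k,
      Measure.smul_apply, Measure.restrict_apply measurableSet_Iio]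
    have hset : Set.Iio t ∩ Set.Ico (0:ℝ) (1/n) = Set.Ico 0 (min t (1/n)) := by
      ext x
      simp only [Set.mem_inter_iff, Set.mem_Iio, Set.mem_Ico, lt_min_iff]
      tauto
    rw [hset, Real.volume_Ico, sub_zero, smul_eq_mul]
    rw [show ((n:ℕ):ENNReal) = ENNReal.ofReal (n:ℝ) from (ENNReal.ofReal_natCast n).symm,
      ← ENNReal.ofReal_mul hnpos.le]
    congr 1
    rw [mul_min_of_nonneg _ _ hnpos.le, mul_one_div, div_self hn0]
  set P : Fin n → ENNReal := fun k => ENNReal.ofReal (min ((n:ℝ)*a - (k:ℕ)) 1) with hP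
  set p : Fin n → ℝ := fun k => cqclamp ((n:ℝ)*a - (k:ℕ)) with hp
  have hγdist' : ∀ (k m : Fin n), μ {ω | γ ω k < a - ((m:ℕ):ℝ)/n} = P m := by
    intro k m
    rw [hγdist k]
    congr 2
    field_simp
  -- decomposition of the event over permutations
  set A : Equiv.Perm (Fin n) → Set Ω := fun σ => {ω | π ω = ⇑σ} with hA
  set B : Equiv.Perm (Fin n) → Set Ω := fun σ =>
    {ω | γ ω i < a - ((σ i : ℕ):ℝ)/n ∧ γ ω j < a - ((σ j : ℕ):ℝ)/n} with hB
  have hexists : ∀ ω, ∃ σ : Equiv.Perm (Fin n), π ω = ⇑σ :=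
    fun ω => ⟨Equiv.ofBijective (π ω) (hbij ω), rfl⟩
  have hEdecomp : {ω | ((π ω i : ℕ) : ℝ) / n + γ ω i < a ∧ ((π ω j : ℕ):ℝ)/n + γ ω j < a}
      = ⋃ σ : Equiv.Perm (Fin n), A σ ∩ B σ := by
    ext ω
    simp only [Set.mem_setOf_eq, Set.mem_iUnion, Set.mem_inter_iff, hA, hB]
    constructor
    · rintro ⟨h1, h2⟩
      obtain ⟨σ, hσ⟩ := hexists ω
      rw [hσ] at h1 h2
      exact ⟨σ, hσ, by linarith, by linarith⟩
    · rintro ⟨σ, hσ, hb1, hb2⟩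
      rw [hσ]
      exact ⟨by linarith, by linarith⟩
  have hAmeas : ∀ σ : Equiv.Perm (Fin n), MeasurableSet (A σ) := by
    intro σ
    have : A σ = ⋂ x, (fun ω => π ω x) ⁻¹' {σ x} := by
      ext ω; simp [hA, funext_iff]
    rw [this]
    exact MeasurableSet.iInter fun x =>
      ((measurable_pi_apply x).comp hπmeas) (MeasurableSet.singleton (σ x))
  have hBmeas : ∀ σ : Equiv.Perm (Fin n), MeasurableSet (B σ) := by
    intro σ
    exact ((hγmeas i) measurableSet_Iio).inter ((hγmeas j) measurableSet_Iio)
  have hdisj : Pairwise (Function.onFun Disjoint fun σ : Equiv.Perm (Fin n) => A σ ∩ B σ) := by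
    intro σ τ hστ
    refine Set.disjoint_left.2 ?_
    rintro ω ⟨hω1, _⟩ ⟨hω2, _⟩
    exact hστ (Equiv.coe_fn_injective ((hω1 : π ω = ⇑σ).symm.trans hω2))
  -- measure of each piece
  have hterm : ∀ σ : Equiv.Perm (Fin n),
      μ (A σ ∩ B σ) = (n.factorial : ENNReal)⁻¹ * (P (σ i) * P (σ j)) := by
    intro σ
    set s : Fin n → Set ℝ := fun k =>
      if k = i then Set.Iio (a - ((σ i : ℕ):ℝ)/n)
      else if k = j then Set.Iio (a - ((σ j:ℕ):ℝ)/n) else Set.univ with hs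
    have hsmeas : ∀ k, MeasurableSet (s k) := by
      intro k; simp only [hs]
      split_ifs <;> first | exact measurableSet_Iio | exact MeasurableSet.univ
    have hBs : B σ = {ω | ∀ k, γ ω k ∈ s k} := by
      ext ω
      simp only [hB, Set.mem_setOf_eq, hs]
      constructor
      · rintro ⟨h1, h2⟩ k
        split_ifs with hk1 hk2
        · subst hk1; exact h1
        · subst hk2; exact h2
        · trivial
      · intro h
        have h1 := h i
        have h2 := h j
        simp only [if_pos rfl] at h1
        rw [if_neg hij.symm, if_pos rfl] at h2
        exact ⟨h1, h2⟩
    rw [hBs, hindep σ s hsmeas, hπ σ]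
    congr 1
    have hg : ∀ k, μ {ω | γ ω k ∈ s k}
        = if k = i then P (σ i) else if k = j then P (σ j) else 1 := by
      intro k
      simp only [hs]
      split_ifs with hk1 hk2
      · exact hγdist' k (σ i)
      · exact hγdist' k (σ j)
      · simp
    rw [Finset.prod_congr rfl (fun k _ => hg k)]
    rw [← Finset.mul_prod_erase _ _ (Finset.mem_univ i), if_pos rfl]
    rw [← Finset.mul_prod_erase _ _ (Finset.mem_erase.2 ⟨hij.symm, Finset.mem_univ j⟩),
      if_neg hij.symm, if_pos rfl]
    rw [Finset.prod_eq_one, mul_one]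
    intro k hk
    simp only [Finset.mem_erase] at hk
    rw [if_neg hk.2.1, if_neg hk.1]
  -- put together
  rw [hEdecomp, measure_iUnion hdisj (fun σ => (hAmeas σ).inter (hBmeas σ)), tsum_fintype]
  rw [Finset.sum_congr rfl (fun σ _ => hterm σ)]
  have hfactR : (n.factorial : ℝ) ≠ 0 := Nat.cast_ne_zero.2 n.factorial_ne_zero
  have hPp : ∀ k, (P k).toReal = p k := by
    intro k
    simp only [hP, hp]
    rw [ENNReal.toReal_ofReal']
    rfl
  have hfacttop : ((n.factorial : ENNReal))⁻¹ ≠ ⊤ :=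
    ENNReal.inv_ne_top.2 (Nat.cast_ne_zero.2 n.factorial_ne_zero)
  have htoReal : (∑ σ : Equiv.Perm (Fin n), (n.factorial : ENNReal)⁻¹ * (P (σ i) * P (σ j))).toReal
      = ∑ σ : Equiv.Perm (Fin n), (n.factorial : ℝ)⁻¹ * (p (σ i) * p (σ j)) := by
    have hne : ∀ σ ∈ (Finset.univ : Finset (Equiv.Perm (Fin n))),
        (n.factorial : ENNReal)⁻¹ * (P (σ i) * P (σ j)) ≠ ⊤ := fun σ _ =>
      ENNReal.mul_ne_top hfacttop
        (ENNReal.mul_ne_top ENNReal.ofReal_ne_top ENNReal.ofReal_ne_top)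
    rw [ENNReal.toReal_sum hne]
    refine Finset.sum_congr rfl fun σ _ => ?_
    rw [ENNReal.toReal_mul, ENNReal.toReal_mul, ENNReal.toReal_inv, ENNReal.toReal_natCast,
      hPp, hPp]
  rw [htoReal, ← Finset.mul_sum, perm_sum_final i j hij p]
  -- evaluate the sums
  have hx0 : (0:ℝ) ≤ (n:ℝ)*a := by positivity
  have hx1 : (n:ℝ)*a ≤ n := by nlinarith
  have hS : ∑ k, p k = (n:ℝ)*a := by
    rw [hp]
    rw [Fin.sum_univ_eq_sum_range (fun k => cqclamp ((n:ℝ)*a - k)) n]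
    exact sum_cqclamp n _ hx0 hx1
  have hT : ∑ k, p k ^ 2 = (⌊(n:ℝ)*a⌋ : ℝ) + ((n:ℝ)*a - ⌊(n:ℝ)*a⌋)^2 := by
    rw [hp]
    rw [Fin.sum_univ_eq_sum_range (fun k => cqclamp ((n:ℝ)*a - k) ^ 2) n]
    exact sum_cqclamp_sq n _ hx0 hx1
  rw [hS, hT]
  have hden : ((n:ℝ) * ((n:ℝ)-1)) ≠ 0 := by
    have h2 : (2:ℝ) ≤ (n:ℝ) := by exact_mod_cast hn
    intro h
    rcases mul_eq_zero.1 h with h' | h' <;> linarith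
  set F : ℝ := (⌊(n:ℝ)*a⌋ : ℝ) with hF
  have hn1 : (n:ℝ) - 1 ≠ 0 := by
    have h2 : (2:ℝ) ≤ (n:ℝ) := by exact_mod_cast hn
    linarith
  field_simp
  ring
end

section
/- For the correlated quantizers Qᵢ(a) = 𝟙{πᵢ/n + γᵢ < a} applied to a common a ∈ [0,1]: E[(∑ᵢ₌₁ⁿ(a - Qᵢ(a)))²] = (na - ⌊na⌋)(⌊na⌋ + 1 - na) ≤ 1/4. Consequently the MSE of the average satisfies E[((1/n)∑ᵢ(a - Qᵢ(a)))²] ≤ 1/(4n²). -/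
open MeasureTheory ProbabilityTheory

/-- for the correlated quantizers `Q i = 𝟙{π i/n + γ i < a}` applied to a common
`a ∈ [0,1]`, `E[(∑ i (a - Q i))²] = (na - ⌊na⌋)(⌊na⌋ + 1 - na) ≤ 1/4`, and therefore the MSE
of the average satisfies `E[((1/n) ∑ i (a - Q i))²] ≤ 1/(4n²)`. -/
theorem correlated_quantizer_mse (n : ℕ) (hn : 0 < n) (a : ℝ)
    (ha : a ∈ Set.Icc (0 : ℝ) 1)
    {Ω : Type*} [MeasurableSpace Ω] (μ : Measure Ω) [IsProbabilityMeasure μ]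
    (π : Ω → Fin n → Fin n) (hbij : ∀ ω, Function.Bijective (π ω))
    (γ : Ω → Fin n → ℝ)
    (hπmeas : Measurable π) (hγmeas : ∀ i, Measurable (fun ω => γ ω i))
    (hπ : ∀ σ : Equiv.Perm (Fin n), μ {ω | π ω = ⇑σ} = ((n.factorial : ENNReal))⁻¹)
    (hγ : ∀ i, Measure.map (fun ω => γ ω i) μ
      = (n : ENNReal) • (volume.restrict (Set.Ico (0 : ℝ) (1 / n))))
    (hindep : ∀ (σ : Equiv.Perm (Fin n)) (s : Fin n → Set ℝ),
      (∀ i, MeasurableSet (s i)) →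
      μ ({ω | π ω = ⇑σ} ∩ {ω | ∀ i, γ ω i ∈ s i})
        = μ {ω | π ω = ⇑σ} * ∏ i, μ {ω | γ ω i ∈ s i})
    (Q : Fin n → Ω → ℝ)
    (hQ : ∀ i ω, Q i ω = if ((π ω i : ℕ) : ℝ) / n + γ ω i < a then 1 else 0) :
    (∫ ω, (∑ i, (a - Q i ω)) ^ 2 ∂μ
        = ((n : ℝ) * a - ⌊(n : ℝ) * a⌋) * ((⌊(n : ℝ) * a⌋ : ℝ) + 1 - (n : ℝ) * a)) ∧
    ((n : ℝ) * a - ⌊(n : ℝ) * a⌋) * ((⌊(n : ℝ) * a⌋ : ℝ) + 1 - (n : ℝ) * a) ≤ 1 / 4 ∧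
    ∫ ω, ((1 / (n : ℝ)) * ∑ i, (a - Q i ω)) ^ 2 ∂μ ≤ 1 / (4 * (n : ℝ) ^ 2) := by
  classical
  have hn' : (0:ℝ) < n := by exact_mod_cast hn
  set x : ℝ := (n:ℝ) * a with hxdef
  have hx0 : 0 ≤ x := mul_nonneg hn'.le ha.1
  have hxn : x ≤ n := by nlinarith [ha.2]
  set kZ : ℤ := ⌊x⌋ with hkZdef
  set f : ℝ := x - kZ with hfdef
  have hf0 : 0 ≤ f := sub_nonneg.2 (Int.floor_le x)
  have hf1 : f < 1 := by
    have := Int.lt_floor_add_one x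
    simp only [hfdef]; push_cast; linarith
  have hkZ0 : 0 ≤ kZ := Int.floor_nonneg.2 hx0
  have hkZn : kZ ≤ (n:ℤ) := by
    have h1 : kZ ≤ ⌊(n:ℝ)⌋ := Int.floor_le_floor hxn
    simpa using h1
  set k : ℕ := kZ.toNat with hkdef
  have hkk : (k:ℤ) = kZ := Int.toNat_of_nonneg hkZ0
  have hkn : k ≤ n := by omega
  -- the relevant condition and indicator sum
  set C : Fin n → Ω → Prop := fun i ω => ((π ω i : ℕ) : ℤ) = kZ ∧ γ ω i < f / n with hCdef
  set B : Ω → ℝ := fun ω => ∑ i, if C i ω then 1 else 0 with hBdef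
  set T : Fin n → Set Ω := fun i => {ω | C i ω} with hTdef
  have hTmeas : ∀ i, MeasurableSet (T i) := by
    intro i
    have h1 : MeasurableSet {ω | ((π ω i : ℕ) : ℤ) = kZ} := by
      have hm : Measurable fun ω => π ω i := (measurable_pi_apply i).comp hπmeas
      have : {ω | ((π ω i : ℕ) : ℤ) = kZ}
          = (fun ω => π ω i) ⁻¹' {j : Fin n | ((j : ℕ) : ℤ) = kZ} := rfl
      rw [this]
      exact hm (Set.Finite.measurableSet (Set.toFinite _))
    have h2 : MeasurableSet {ω | γ ω i < f / n} := (hγmeas i) measurableSet_Iio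
    exact h1.inter h2
  -- law of each γ i
  have hmap : ∀ (i : Fin n) (s : Set ℝ), MeasurableSet s →
      μ {ω | γ ω i ∈ s} = (n : ENNReal) * volume (s ∩ Set.Ico (0:ℝ) (1 / n)) := by
    intro i s hs
    have h1 : μ ((fun ω => γ ω i) ⁻¹' s) = Measure.map (fun ω => γ ω i) μ s :=
      (Measure.map_apply (hγmeas i) hs).symm
    have : {ω | γ ω i ∈ s} = (fun ω => γ ω i) ⁻¹' s := rfl
    rw [this, h1, hγ i, Measure.smul_apply, Measure.restrict_apply hs, smul_eq_mul]
  -- a.e., all γ i lie in [0, 1/n)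
  have hae : ∀ᵐ ω ∂μ, ∀ i, 0 ≤ γ ω i ∧ γ ω i < 1 / n := by
    rw [MeasureTheory.ae_all_iff]
    intro i
    have hnull : μ {ω | ¬ (0 ≤ γ ω i ∧ γ ω i < 1 / n)} = 0 := by
      have hco : {ω | ¬ (0 ≤ γ ω i ∧ γ ω i < 1 / n)}
          = {ω | γ ω i ∈ (Set.Ico (0:ℝ) (1 / n))ᶜ} := by
        ext ω; simp [Set.mem_Ico]
      rw [hco, hmap i _ (measurableSet_Ico.compl), Set.compl_inter_self]
      simp
    exact hnull
  -- pointwise identity: on the good set, ∑ (a - Q i) = f - B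
  have hptQ : ∀ ω, (∀ i, 0 ≤ γ ω i ∧ γ ω i < 1 / n) → ∀ i,
      Q i ω = (if ((π ω i : ℕ) : ℤ) < kZ then 1 else 0) + (if C i ω then 1 else 0) := by
    intro ω hω i
    obtain ⟨hg0, hg1⟩ := hω i
    have hpn : ((π ω i : ℕ) : ℝ) / n * n = ((π ω i : ℕ) : ℝ) := div_mul_cancel₀ _ hn'.ne'
    have hiff : (((π ω i : ℕ) : ℝ) / n + γ ω i < a) ↔
        (((π ω i : ℕ) : ℝ) + n * γ ω i < x) := by
      rw [hxdef]
      constructor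
      · intro h; nlinarith
      · intro h; nlinarith
    have hxk : x = (kZ : ℝ) + f := by rw [hfdef]; ring
    have hng1 : (n : ℝ) * γ ω i < 1 := by
      have := (mul_lt_mul_iff_right₀ hn').2 hg1
      rwa [mul_one_div, div_self hn'.ne'] at this
    have hng0 : 0 ≤ (n : ℝ) * γ ω i := mul_nonneg hn'.le hg0
    rw [hQ i ω]
    rcases lt_trichotomy ((π ω i : ℕ) : ℤ) kZ with hlt | heq | hgt
    · have hj1 : ((π ω i : ℕ) : ℝ) + 1 ≤ (kZ : ℝ) := by exact_mod_cast Int.add_one_le_iff.2 hlt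
      have hkx : (kZ : ℝ) ≤ x := Int.floor_le x
      have hcond : ((π ω i : ℕ) : ℝ) / n + γ ω i < a := hiff.2 (by linarith)
      have hC : ¬ C i ω := fun hC => absurd hC.1 (by omega)
      simp [hcond, hlt, hC]
    · have hjr : ((π ω i : ℕ) : ℝ) = (kZ : ℝ) := by exact_mod_cast heq
      have hCiff : (((π ω i : ℕ) : ℝ) / n + γ ω i < a) ↔ C i ω := by
        rw [hiff]
        constructor
        · intro h
          refine ⟨heq, ?_⟩
          rw [lt_div_iff₀ hn']
          rw [hxk, hjr] at h; linarith
        · intro hC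
          obtain ⟨-, h2⟩ := hC
          rw [lt_div_iff₀ hn'] at h2
          rw [hxk, hjr]; linarith
      have hnlt : ¬ (((π ω i : ℕ) : ℤ) < kZ) := by omega
      by_cases hC : C i ω
      · rw [if_pos (hCiff.2 hC), if_neg hnlt, if_pos hC]; norm_num
      · rw [if_neg (fun h => hC (hCiff.1 h)), if_neg hnlt, if_neg hC]; norm_num
    · have hj1 : (kZ : ℝ) + 1 ≤ ((π ω i : ℕ) : ℝ) := by exact_mod_cast Int.add_one_le_iff.2 hgt
      have hcond : ¬ (((π ω i : ℕ) : ℝ) / n + γ ω i < a) := by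
        rw [hiff, hxk]; push_neg; linarith
      have hC : ¬ C i ω := fun hC => absurd hC.1 (by omega)
      have hnlt : ¬ (((π ω i : ℕ) : ℤ) < kZ) := by omega
      rw [if_neg hcond, if_neg hnlt, if_neg hC]; norm_num
  have hsum : ∀ ω, (∀ i, 0 ≤ γ ω i ∧ γ ω i < 1 / n) →
      ∑ i, (a - Q i ω) = f - B ω := by
    intro ω hω
    have h1 : ∑ i, (a - Q i ω) = (n:ℝ) * a - ∑ i, Q i ω := by
      rw [Finset.sum_sub_distrib]
      simp [mul_comm]
    have h2 : ∑ i, Q i ω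
        = (∑ i, if ((π ω i : ℕ) : ℤ) < kZ then (1:ℝ) else 0) + B ω := by
      rw [hBdef, ← Finset.sum_add_distrib]
      exact Finset.sum_congr rfl fun i _ => hptQ ω hω i
    have h3 : (∑ i, if ((π ω i : ℕ) : ℤ) < kZ then (1:ℝ) else 0) = (kZ : ℝ) := by
      have hb : ∑ i, (if ((π ω i : ℕ) : ℤ) < kZ then (1:ℝ) else 0)
          = ∑ j : Fin n, (if ((j : ℕ) : ℤ) < kZ then (1:ℝ) else 0) :=
        Fintype.sum_bijective (π ω) (hbij ω)
          (fun i => if ((π ω i : ℕ) : ℤ) < kZ then (1:ℝ) else 0)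
          (fun j => if ((j : ℕ) : ℤ) < kZ then (1:ℝ) else 0) (fun i => rfl)
      rw [hb]
      rw [Fin.sum_univ_eq_sum_range (fun m => if ((m : ℕ) : ℤ) < kZ then (1:ℝ) else 0) n]
      have hcond : ∀ m : ℕ, (((m:ℕ) : ℤ) < kZ) ↔ m < k := by intro m; omega
      simp_rw [hcond]
      rw [Finset.sum_ite, Finset.sum_const_zero, add_zero]
      have hfilter : (Finset.range n).filter (fun m => m < k) = Finset.range k := by
        ext m; simp only [Finset.mem_filter, Finset.mem_range]; omega
      rw [hfilter, Finset.sum_const, Finset.card_range]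
      simp [← hkk]
    rw [h1, h2, h3, hfdef, hxdef]
    ring
  -- B takes values in {0,1}
  have hBsq : ∀ ω, B ω * B ω = B ω := by
    intro ω
    show (∑ i, if C i ω then (1:ℝ) else 0) * (∑ i, if C i ω then (1:ℝ) else 0)
        = (∑ i, if C i ω then (1:ℝ) else 0)
    by_cases hex : ∃ i, C i ω
    · obtain ⟨i0, hi0⟩ := hex
      have hB1 : (∑ i, if C i ω then (1:ℝ) else 0) = 1 := by
        rw [Finset.sum_eq_single i0]
        · exact if_pos hi0
        · intro j _ hj
          by_cases hCj : C j ω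
          · exfalso
            have : π ω j = π ω i0 := by
              have h1 : ((π ω j : ℕ) : ℤ) = ((π ω i0 : ℕ) : ℤ) := by
                rw [hCj.1, hi0.1]
              exact Fin.ext (by exact_mod_cast h1)
            exact hj ((hbij ω).1 this)
          · simp [hCj]
        · intro h; exact absurd (Finset.mem_univ i0) h
      rw [hB1]; norm_num
    · push_neg at hex
      have hB0 : (∑ i, if C i ω then (1:ℝ) else 0) = 0 :=
        Finset.sum_eq_zero fun i _ => by simp [hex i]
      rw [hB0]; norm_num
  -- integrability of B
  have hind : ∀ i, (fun ω => if C i ω then (1:ℝ) else 0) = (T i).indicator (fun _ => (1:ℝ)) := by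
    intro i; ext ω
    by_cases h : C i ω <;> simp [Set.indicator_apply, hTdef, h]
  have hBint : Integrable B μ := by
    rw [hBdef]
    apply integrable_finset_sum
    intro i _
    rw [hind i]
    exact (integrable_const (1:ℝ)).indicator (hTmeas i)
  -- expected value of B is f
  have hEB : ∫ ω, B ω ∂μ = f := by
    have h1 : ∫ ω, B ω ∂μ = ∑ i, (μ (T i)).toReal := by
      rw [hBdef]
      rw [integral_finset_sum _ (fun i _ => by
        rw [hind i]; exact (integrable_const (1:ℝ)).indicator (hTmeas i))]
      refine Finset.sum_congr rfl fun i _ => ?_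
      rw [hind i, integral_indicator_const _ (hTmeas i)]
      simp
      rfl
    rw [h1]
    by_cases hf : f = 0
    · have hTnull : ∀ i, μ (T i) = 0 := by
        intro i
        have hsub : T i ⊆ {ω | γ ω i ∈ Set.Iio (f / n)} := fun ω hω => hω.2
        have : μ {ω | γ ω i ∈ Set.Iio (f / n)} = 0 := by
          rw [hmap i _ measurableSet_Iio, hf]
          have : Set.Iio ((0:ℝ) / n) ∩ Set.Ico (0:ℝ) (1 / n) = ∅ := by
            ext t
            simp only [Set.mem_inter_iff, Set.mem_Iio, Set.mem_Ico, Set.mem_empty_iff_false,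
              iff_false, not_and, zero_div]
            intro ht h0
            exact absurd ht (not_lt.2 h0)
          rw [this]; simp
        exact le_antisymm (le_trans (measure_mono hsub) this.le) zero_le
      simp [hTnull, hf]
    · -- f > 0 case
      have hfpos : 0 < f := lt_of_le_of_ne hf0 (Ne.symm hf)
      have hkltn : k < n := by
        by_contra hcon
        have hkZeq : kZ = (n:ℤ) := by omega
        have hcast : (kZ:ℝ) = (n:ℝ) := by exact_mod_cast hkZeq
        have hfle : f ≤ 0 := by rw [hfdef, hcast]; linarith [hxn]
        linarith
      -- measurable permutation-level sets
      have hA : ∀ σ : Equiv.Perm (Fin n), MeasurableSet {ω | π ω = ⇑σ} := by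
        intro σ
        have heq : {ω | π ω = ⇑σ} = ⋂ i, (fun ω => π ω i) ⁻¹' {σ i} := by
          ext ω
          simp only [Set.mem_setOf_eq, Set.mem_iInter, Set.mem_preimage,
            Set.mem_singleton_iff, funext_iff]
        rw [heq]
        exact MeasurableSet.iInter fun i =>
          ((measurable_pi_apply i).comp hπmeas) (measurableSet_singleton _)
      -- partition by the permutation
      have hpart : ∀ s : Set Ω, MeasurableSet s →
          μ s = ∑ σ : Equiv.Perm (Fin n), μ (s ∩ {ω | π ω = ⇑σ}) := by
        intro s hs
        have hcover : s = ⋃ σ ∈ (Finset.univ : Finset (Equiv.Perm (Fin n))),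
            (s ∩ {ω | π ω = ⇑σ}) := by
          ext ω
          simp only [Set.mem_iUnion, Set.mem_inter_iff, Set.mem_setOf_eq,
            Finset.mem_univ, exists_true_left]
          constructor
          · intro hω
            exact ⟨Equiv.ofBijective (π ω) (hbij ω), hω, rfl⟩
          · rintro ⟨σ, h, -⟩; exact h
        have hdisj : (↑(Finset.univ : Finset (Equiv.Perm (Fin n))) :
            Set (Equiv.Perm (Fin n))).PairwiseDisjoint
            (fun σ => s ∩ {ω | π ω = ⇑σ}) := by
          intro σ _ τ _ hστ
          refine Set.disjoint_left.2 fun ω hω1 hω2 => hστ ?_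
          exact Equiv.coe_fn_injective (hω1.2.symm.trans hω2.2)
        calc μ s = μ (⋃ σ ∈ (Finset.univ : Finset (Equiv.Perm (Fin n))),
              (s ∩ {ω | π ω = ⇑σ})) := by rw [← hcover]
          _ = ∑ σ : Equiv.Perm (Fin n), μ (s ∩ {ω | π ω = ⇑σ}) :=
              measure_biUnion_finset hdisj (fun σ _ => hs.inter (hA σ))
      -- independence computation
      have hγf : ∀ i : Fin n, μ {ω | γ ω i ∈ Set.Iio (f / n)} = ENNReal.ofReal f := by
        intro i
        rw [hmap i _ measurableSet_Iio]
        have hset : Set.Iio (f / n) ∩ Set.Ico (0:ℝ) (1 / n) = Set.Ico 0 (f / n) := by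
          have hle : f / n ≤ 1 / n := by
            rw [div_le_div_iff₀ hn' hn']
            nlinarith [hf1, hn']
          ext t
          simp only [Set.mem_inter_iff, Set.mem_Iio, Set.mem_Ico]
          constructor
          · rintro ⟨h1, h2, h3⟩; exact ⟨h2, h1⟩
          · rintro ⟨h1, h2⟩; exact ⟨h2, h1, lt_of_lt_of_le h2 hle⟩
        rw [hset, Real.volume_Ico, sub_zero]
        rw [show ((n:ENNReal)) = ENNReal.ofReal (n:ℝ) by simp]
        rw [← ENNReal.ofReal_mul hn'.le]
        congr 1
        field_simp
      have hAγ : ∀ (σ : Equiv.Perm (Fin n)) (i : Fin n),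
          μ ({ω | π ω = ⇑σ} ∩ {ω | γ ω i < f / n})
            = (n.factorial : ENNReal)⁻¹ * ENNReal.ofReal f := by
        intro σ i
        set s : Fin n → Set ℝ := fun j => if j = i then Set.Iio (f / n) else Set.univ with hsdef
        have hsm : ∀ j, MeasurableSet (s j) := by
          intro j
          rw [hsdef]
          by_cases h : j = i <;> simp [h, measurableSet_Iio]
        have hseteq : {ω | ∀ j, γ ω j ∈ s j} = {ω | γ ω i < f / n} := by
          ext ω
          simp only [Set.mem_setOf_eq, hsdef]
          constructor
          · intro h
            have := h i
            simpa using this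
          · intro h j
            by_cases hj : j = i
            · subst hj; simpa using h
            · simp [hj]
        have hprod : (∏ j, μ {ω | γ ω j ∈ s j}) = ENNReal.ofReal f := by
          rw [Finset.prod_eq_single i]
          · rw [hsdef]; simpa using hγf i
          · intro j _ hj
            rw [hsdef]
            simp [hj]
          · intro h; exact absurd (Finset.mem_univ i) h
        have := hindep σ s hsm
        rw [hseteq, hprod, hπ σ] at this
        exact this
      -- compute μ (T i)
      have hTi : ∀ i, μ (T i) = ∑ σ : Equiv.Perm (Fin n),
          (if ((σ i : ℕ) : ℤ) = kZ then (n.factorial : ENNReal)⁻¹ * ENNReal.ofReal f else 0) := by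
        intro i
        rw [hpart (T i) (hTmeas i)]
        refine Finset.sum_congr rfl fun σ _ => ?_
        by_cases hσ : ((σ i : ℕ) : ℤ) = kZ
        · rw [if_pos hσ]
          have : T i ∩ {ω | π ω = ⇑σ} = {ω | π ω = ⇑σ} ∩ {ω | γ ω i < f / n} := by
            ext ω
            simp only [hTdef, hCdef, Set.mem_inter_iff, Set.mem_setOf_eq]
            constructor
            · rintro ⟨⟨h1, h2⟩, h3⟩; exact ⟨h3, h2⟩
            · rintro ⟨h1, h2⟩
              refine ⟨⟨?_, h2⟩, h1⟩
              rw [h1]; exact hσ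
          rw [this, hAγ σ i]
        · rw [if_neg hσ]
          have : T i ∩ {ω | π ω = ⇑σ} = ∅ := by
            ext ω
            simp only [hTdef, hCdef, Set.mem_inter_iff, Set.mem_setOf_eq,
              Set.mem_empty_iff_false, iff_false, not_and]
            rintro ⟨h1, h2⟩ h3
            rw [h3] at h1
            exact hσ h1
          rw [this, measure_empty]
      -- sum over i
      set kF : Fin n := ⟨k, hkltn⟩ with hkFdef
      have hsumT : (∑ i, μ (T i)) = ENNReal.ofReal f := by
        simp_rw [hTi]
        rw [Finset.sum_comm]
        have hinner : ∀ σ : Equiv.Perm (Fin n),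
            (∑ i, if ((σ i : ℕ) : ℤ) = kZ then (n.factorial : ENNReal)⁻¹ * ENNReal.ofReal f else 0)
              = (n.factorial : ENNReal)⁻¹ * ENNReal.ofReal f := by
          intro σ
          rw [Finset.sum_eq_single (σ.symm kF)]
          · rw [if_pos]
            rw [Equiv.apply_symm_apply]
            simp [hkFdef, hkk]
          · intro j _ hj
            rw [if_neg]
            intro hj2
            apply hj
            have : σ j = kF := Fin.ext (by exact_mod_cast hj2.trans hkk.symm)
            rw [← this]; exact (Equiv.symm_apply_apply σ j).symm
          · intro h; exact absurd (Finset.mem_univ _) h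
        simp_rw [hinner]
        rw [Finset.sum_const, Finset.card_univ, Fintype.card_perm, Fintype.card_fin]
        rw [nsmul_eq_mul, ← mul_assoc, ENNReal.mul_inv_cancel]
        · rw [one_mul]
        · exact_mod_cast Nat.factorial_pos n |>.ne'
        · exact ENNReal.natCast_ne_top _
      have htoReal : ∑ i, (μ (T i)).toReal = ((∑ i, μ (T i))).toReal := by
        rw [ENNReal.toReal_sum]
        intro i _
        exact measure_ne_top μ _
      rw [htoReal, hsumT, ENNReal.toReal_ofReal hf0]
  -- main integral computation
  have hmain : ∫ ω, (∑ i, (a - Q i ω)) ^ 2 ∂μ = f * (1 - f) := by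
    have hcong : ∫ ω, (∑ i, (a - Q i ω)) ^ 2 ∂μ
        = ∫ ω, (f ^ 2 + (1 - 2 * f) * B ω) ∂μ := by
      apply integral_congr_ae
      filter_upwards [hae] with ω hω
      rw [hsum ω hω]
      have := hBsq ω
      ring_nf
      nlinarith [hBsq ω]
    rw [hcong]
    rw [integral_add (integrable_const _) (hBint.const_mul _)]
    rw [integral_const_mul, hEB, integral_const]
    simp only [Measure.real, measure_univ, ENNReal.toReal_one, smul_eq_mul, one_mul]
    ring
  have hRHS : ((n:ℝ) * a - ⌊(n:ℝ) * a⌋) * ((⌊(n:ℝ) * a⌋ : ℝ) + 1 - (n:ℝ) * a) = f * (1 - f) := by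
    rw [hfdef, hkZdef, hxdef]; ring
  have hquarter : f * (1 - f) ≤ 1 / 4 := by nlinarith [sq_nonneg (f - 1 / 2)]
  refine ⟨by rw [hRHS]; exact hmain, by rw [hRHS]; exact hquarter, ?_⟩
  have havg : ∫ ω, ((1 / (n:ℝ)) * ∑ i, (a - Q i ω)) ^ 2 ∂μ
      = (1 / (n:ℝ)) ^ 2 * (f * (1 - f)) := by
    simp_rw [mul_pow]
    rw [integral_const_mul, hmain]
  rw [havg]
  calc (1 / (n:ℝ)) ^ 2 * (f * (1 - f)) ≤ (1 / (n:ℝ)) ^ 2 * (1 / 4) :=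
        mul_le_mul_of_nonneg_left hquarter (by positivity)
    _ = 1 / (4 * (n:ℝ) ^ 2) := by
        field_simp
end

section
/- Let S be importance sampling with probabilities qᵢ > 0 (∑qᵢ = 1), and let Q be an unbiased random compressor with E‖Q(a) − a‖² ≤ ω‖a‖², applied independently to each aᵢ. Then E‖S(Q(a₁),…,Q(aₙ)) − (1/n)∑ᵢaᵢ‖² ≤ ((1+ω)/n²)∑ᵢ (1/qᵢ)‖aᵢ‖² − ‖(1/n)∑ᵢaᵢ‖². -/
open MeasureTheory

/-- composition of an unbiased compressor `Q` (with
`E‖Q(a) − a‖² ≤ ω‖a‖²`) with importance sampling (probabilities `q i`, independent of `Q`)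
satisfies `E‖S(Q(a₁),…,Q(aₙ)) − (1/n)∑aᵢ‖² ≤ ((1+ω)/n²)∑ (1/qᵢ)‖aᵢ‖² − ‖(1/n)∑aᵢ‖²`. -/
theorem importance_sampling_compression (d n : ℕ) (hn : 0 < n)
    (q : Fin n → ℝ) (hq : ∀ i, 0 < q i) (hsum : ∑ i, q i = 1)
    {Ω : Type*} [MeasurableSpace Ω] (μ : Measure Ω) [IsProbabilityMeasure μ]
    (Q : Ω → EuclideanSpace ℝ (Fin d) → EuclideanSpace ℝ (Fin d)) (ω₀ : ℝ) (hω : 0 ≤ ω₀)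
    (hint : ∀ a : EuclideanSpace ℝ (Fin d), Integrable (fun ω => Q ω a) μ)
    (hint2 : ∀ a : EuclideanSpace ℝ (Fin d), Integrable (fun ω => ‖Q ω a - a‖ ^ 2) μ)
    (hunbiased : ∀ a : EuclideanSpace ℝ (Fin d), ∫ ω, Q ω a ∂μ = a)
    (hvar : ∀ a : EuclideanSpace ℝ (Fin d), ∫ ω, ‖Q ω a - a‖ ^ 2 ∂μ ≤ ω₀ * ‖a‖ ^ 2)
    (a : Fin n → EuclideanSpace ℝ (Fin d)) :
    ∑ i, q i * ∫ ω, ‖((n : ℝ) * q i)⁻¹ • Q ω (a i) - (1 / (n : ℝ)) • ∑ j, a j‖ ^ 2 ∂μ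
      ≤ ((1 + ω₀) / (n : ℝ) ^ 2) * ∑ i, (1 / q i) * ‖a i‖ ^ 2
        - ‖(1 / (n : ℝ)) • ∑ i, a i‖ ^ 2 := by
  have hn' : (n : ℝ) ≠ 0 := Nat.cast_ne_zero.mpr hn.ne'
  set b : EuclideanSpace ℝ (Fin d) := (1 / (n : ℝ)) • ∑ j, a j with hb
  -- per-index bound
  have key : ∀ i, ∫ ω, ‖((n : ℝ) * q i)⁻¹ • Q ω (a i) - b‖ ^ 2 ∂μ
      ≤ (((n : ℝ) * q i)⁻¹) ^ 2 * (ω₀ * ‖a i‖ ^ 2)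
        + ‖((n : ℝ) * q i)⁻¹ • a i - b‖ ^ 2 := by
    intro i
    set t : ℝ := ((n : ℝ) * q i)⁻¹ with ht
    set y : EuclideanSpace ℝ (Fin d) := t • a i - b with hy
    have hx0 : ∫ ω, (Q ω (a i) - a i) ∂μ = 0 := by
      rw [integral_sub (hint _) (integrable_const _), hunbiased, integral_const,
        probReal_univ, one_smul, sub_self]
    have hinner : Integrable (fun ω => inner ℝ (Q ω (a i) - a i) y : Ω → ℝ) μ := by
      exact ((hint (a i)).sub (integrable_const _)).inner_const y
    have heq : ∫ ω, ‖t • Q ω (a i) - b‖ ^ 2 ∂μ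
        = t ^ 2 * ∫ ω, ‖Q ω (a i) - a i‖ ^ 2 ∂μ
          + (2 * t) * inner ℝ (∫ ω, (Q ω (a i) - a i) ∂μ) y + ‖y‖ ^ 2 := by
      have hdecomp : ∀ ω', t • Q ω' (a i) - b = t • (Q ω' (a i) - a i) + y := by
        intro ω'; rw [hy, smul_sub]; abel
      have hpt : ∀ ω', ‖t • Q ω' (a i) - b‖ ^ 2
          = t ^ 2 * ‖Q ω' (a i) - a i‖ ^ 2
            + (2 * t) * (inner ℝ (Q ω' (a i) - a i) y : ℝ) + ‖y‖ ^ 2 := by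
        intro ω'
        rw [hdecomp ω', @norm_add_sq_real, norm_smul, real_inner_smul_left]
        simp [mul_pow]; ring
      calc ∫ ω, ‖t • Q ω (a i) - b‖ ^ 2 ∂μ
          = ∫ ω, (t ^ 2 * ‖Q ω (a i) - a i‖ ^ 2
              + (2 * t) * (inner ℝ (Q ω (a i) - a i) y : ℝ) + ‖y‖ ^ 2) ∂μ := by
            exact integral_congr_ae (Filter.Eventually.of_forall fun ω' => hpt ω')
        _ = t ^ 2 * ∫ ω, ‖Q ω (a i) - a i‖ ^ 2 ∂μ
              + (2 * t) * inner ℝ (∫ ω, (Q ω (a i) - a i) ∂μ) y + ‖y‖ ^ 2 := by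
            have hA : Integrable (fun ω => t ^ 2 * ‖Q ω (a i) - a i‖ ^ 2) μ :=
              (hint2 (a i)).const_mul _
            have hB : Integrable
                (fun ω => (2 * t) * (inner ℝ (Q ω (a i) - a i) y : ℝ)) μ :=
              hinner.const_mul _
            have h1 : ∫ ω, (t ^ 2 * ‖Q ω (a i) - a i‖ ^ 2
                + (2 * t) * (inner ℝ (Q ω (a i) - a i) y : ℝ) + ‖y‖ ^ 2) ∂μ
                = (∫ ω, (t ^ 2 * ‖Q ω (a i) - a i‖ ^ 2
                    + (2 * t) * (inner ℝ (Q ω (a i) - a i) y : ℝ)) ∂μ)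
                  + ∫ _ω, (‖y‖ ^ 2 : ℝ) ∂μ :=
              integral_add (hA.add hB) (integrable_const _)
            have h2 : ∫ ω, (t ^ 2 * ‖Q ω (a i) - a i‖ ^ 2
                + (2 * t) * (inner ℝ (Q ω (a i) - a i) y : ℝ)) ∂μ
                = (∫ ω, t ^ 2 * ‖Q ω (a i) - a i‖ ^ 2 ∂μ)
                  + ∫ ω, (2 * t) * (inner ℝ (Q ω (a i) - a i) y : ℝ) ∂μ :=
              integral_add hA hB
            have h3 : ∫ ω, (inner ℝ y (Q ω (a i) - a i) : ℝ) ∂μ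
                = inner ℝ y (∫ ω, (Q ω (a i) - a i) ∂μ) :=
              integral_inner ((hint (a i)).sub (integrable_const (a i))) y
            have h4 : ∫ ω, (inner ℝ (Q ω (a i) - a i) y : ℝ) ∂μ
                = inner ℝ (∫ ω, (Q ω (a i) - a i) ∂μ) y :=
              calc ∫ ω, (inner ℝ (Q ω (a i) - a i) y : ℝ) ∂μ
                  = ∫ ω, (inner ℝ y (Q ω (a i) - a i) : ℝ) ∂μ :=
                    integral_congr_ae (Filter.Eventually.of_forall fun ω' =>
                      real_inner_comm _ _)
                _ = inner ℝ y (∫ ω, (Q ω (a i) - a i) ∂μ) := h3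
                _ = inner ℝ (∫ ω, (Q ω (a i) - a i) ∂μ) y := real_inner_comm _ _
            rw [h1, h2, integral_const, probReal_univ, one_smul,
                integral_const_mul, integral_const_mul, h4]
    rw [heq, hx0, inner_zero_left, mul_zero, add_zero]
    have h1 : t ^ 2 * ∫ ω, ‖Q ω (a i) - a i‖ ^ 2 ∂μ ≤ t ^ 2 * (ω₀ * ‖a i‖ ^ 2) :=
      mul_le_mul_of_nonneg_left (hvar (a i)) (sq_nonneg t)
    linarith
  -- sum the bounds
  have hsum1 : ∑ i, q i * ∫ ω, ‖((n : ℝ) * q i)⁻¹ • Q ω (a i) - b‖ ^ 2 ∂μ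
      ≤ ∑ i, q i * ((((n : ℝ) * q i)⁻¹) ^ 2 * (ω₀ * ‖a i‖ ^ 2)
        + ‖((n : ℝ) * q i)⁻¹ • a i - b‖ ^ 2) :=
    Finset.sum_le_sum fun i _ => mul_le_mul_of_nonneg_left (key i) (hq i).le
  refine hsum1.trans_eq ?_
  -- algebraic identity for the remaining sum
  have hterm : ∀ i, q i * ((((n : ℝ) * q i)⁻¹) ^ 2 * (ω₀ * ‖a i‖ ^ 2)
        + ‖((n : ℝ) * q i)⁻¹ • a i - b‖ ^ 2)
      = ((1 + ω₀) / (n : ℝ) ^ 2) * ((1 / q i) * ‖a i‖ ^ 2)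
        - 2 * (inner ℝ ((1 / (n : ℝ)) • a i) b : ℝ) + q i * ‖b‖ ^ 2 := by
    intro i
    have hqi : q i ≠ 0 := (hq i).ne'
    rw [@norm_sub_sq_real, norm_smul, real_inner_smul_left, real_inner_smul_left]
    simp only [mul_pow, Real.norm_eq_abs, sq_abs]
    field_simp
    ring
  rw [Finset.sum_congr rfl fun i _ => hterm i]
  rw [Finset.sum_add_distrib, Finset.sum_sub_distrib, ← Finset.mul_sum,
    ← Finset.sum_mul, hsum, one_mul]
  have hib : ∑ i, 2 * (inner ℝ ((1 / (n : ℝ)) • a i) b : ℝ) = 2 * ‖b‖ ^ 2 := by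
    rw [← Finset.mul_sum, ← sum_inner, ← Finset.smul_sum, ← hb, real_inner_self_eq_norm_sq]
  rw [hib]
  ring
end

section
/- Let Q₁,…,Qₙ : ℝᵈ → ℝᵈ be individually unbiased random operators. If S : (ℝᵈ)ⁿ → ℝᵈ satisfies the weighted AB-inequality with constants A, B and weights wᵢ summing to 1, and the functions f₁,…,fₙ satisfy the weighted smoothness and weighted Hessian-variance conditions with constants L₊,w and L±,w, then for the MARINA gradient estimator g^{t+1} (equal to ∇f(x^{t+1}) with probability p, and g^t + S({∇fᵢ(x^{t+1}) − ∇fᵢ(x^t)}) otherwise), conditionally on x^{t+1}: E‖g^{t+1} − ∇f(x^{t+1})‖² ≤ (1−p)((A−B)L₊,w² + B·L±,w²)‖x^{t+1} − x^t‖² + (1−p)‖g^t − ∇f(x^t)‖². -/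
open MeasureTheory

/-- key MARINA variance lemma: if the combinatorial compressor `S` is unbiased
and satisfies the weighted AB-inequality with constants `A, B` and weights `w`, and the local
losses satisfy the weighted smoothness and weighted Hessian-variance conditions with constants
`Lpw` and `Lpm`, then conditionally on `x⁺` the MARINA estimator
(`∇f(x⁺)` with probability `p`, `g + S({∇fᵢ(x⁺) − ∇fᵢ(x)})` with probability `1−p`) satisfies
`E‖g⁺ − ∇f(x⁺)‖² ≤ (1−p)((A−B)Lpw² + B Lpm²)‖x⁺ − x‖² + (1−p)‖g − ∇f(x)‖²`. -/
theorem marina_variance_lemma (d n : ℕ) (hn : 0 < n)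
    {Ω : Type*} [MeasurableSpace Ω] (μ : Measure Ω) [IsProbabilityMeasure μ]
    (S : Ω → (Fin n → EuclideanSpace ℝ (Fin d)) → EuclideanSpace ℝ (Fin d))
    (A B : ℝ) (hA : 0 ≤ A) (hB : 0 ≤ B) (hBA : B ≤ A)
    (w : Fin n → ℝ) (hw : ∀ i, 0 < w i) (hwsum : ∑ i, w i = 1)
    (hSint : ∀ v : Fin n → EuclideanSpace ℝ (Fin d), Integrable (fun ω => S ω v) μ)
    (hSint2 : ∀ v : Fin n → EuclideanSpace ℝ (Fin d),
      Integrable (fun ω => ‖S ω v - (1 / (n : ℝ)) • ∑ i, v i‖ ^ 2) μ)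
    (hSunbiased : ∀ v : Fin n → EuclideanSpace ℝ (Fin d),
      ∫ ω, S ω v ∂μ = (1 / (n : ℝ)) • ∑ i, v i)
    (hSab : ∀ v : Fin n → EuclideanSpace ℝ (Fin d),
      ∫ ω, ‖S ω v - (1 / (n : ℝ)) • ∑ i, v i‖ ^ 2 ∂μ
        ≤ (A / n) * ∑ i, (1 / ((n : ℝ) * w i)) * ‖v i‖ ^ 2
          - B * ‖(1 / (n : ℝ)) • ∑ i, v i‖ ^ 2)
    (f : Fin n → EuclideanSpace ℝ (Fin d) → ℝ) (hdiff : ∀ i, Differentiable ℝ (f i))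
    (Lpw Lpm : ℝ) (hLpw : 0 ≤ Lpw) (hLpm : 0 ≤ Lpm)
    (hsmooth : ∀ x y, (1 / (n : ℝ)) * ∑ i, (1 / ((n : ℝ) * w i))
        * ‖gradient (f i) x - gradient (f i) y‖ ^ 2 ≤ Lpw ^ 2 * ‖x - y‖ ^ 2)
    (hhess : ∀ x y, (1 / (n : ℝ)) * ∑ i, (1 / ((n : ℝ) * w i))
          * ‖gradient (f i) x - gradient (f i) y‖ ^ 2
        - ‖gradient (fun z => (1 / (n : ℝ)) * ∑ i, f i z) x
            - gradient (fun z => (1 / (n : ℝ)) * ∑ i, f i z) y‖ ^ 2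
        ≤ Lpm ^ 2 * ‖x - y‖ ^ 2)
    (p : ℝ) (hp : p ∈ Set.Ioc (0 : ℝ) 1)
    (xt xt1 gt : EuclideanSpace ℝ (Fin d)) :
    (1 - p) * ∫ ω, ‖gt + S ω (fun i => gradient (f i) xt1 - gradient (f i) xt)
          - gradient (fun z => (1 / (n : ℝ)) * ∑ i, f i z) xt1‖ ^ 2 ∂μ
      ≤ (1 - p) * ((A - B) * Lpw ^ 2 + B * Lpm ^ 2) * ‖xt1 - xt‖ ^ 2
        + (1 - p) * ‖gt - gradient (fun z => (1 / (n : ℝ)) * ∑ i, f i z) xt‖ ^ 2 := by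
  have gradF : ∀ x, gradient (fun z => (1 / (n : ℝ)) * ∑ i, f i z) x
      = (1 / (n : ℝ)) • ∑ i, gradient (f i) x := by
    intro x
    have h : HasGradientAt (fun z => (1 / (n : ℝ)) * ∑ i, f i z)
        ((1 / (n : ℝ)) • ∑ i, gradient (f i) x) x := by
      unfold HasGradientAt HasGradientAtFilter
      have hf : HasFDerivAt (fun z => (1 / (n : ℝ)) * ∑ i, f i z)
          ((1 / (n : ℝ)) • ∑ i, InnerProductSpace.toDual ℝ _ (gradient (f i) x)) x := by
        have : ∀ i : Fin n, HasFDerivAt (f i) (InnerProductSpace.toDual ℝ _ (gradient (f i) x)) x :=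
          fun i => (hdiff i x).hasGradientAt
        exact (HasFDerivAt.fun_sum (fun i _ => this i)).const_mul _
      exact (by simpa [_root_.map_smul, _root_.map_sum] using hf : HasFDerivAt (fun z => (1 / (n : ℝ)) * ∑ i, f i z)
          (InnerProductSpace.toDual ℝ _ ((1 / (n : ℝ)) • ∑ i, gradient (f i) x)) x)
    exact h.gradient
  set v : Fin n → EuclideanSpace ℝ (Fin d) :=
    fun i => gradient (f i) xt1 - gradient (f i) xt with hv
  set m : EuclideanSpace ℝ (Fin d) := (1 / (n : ℝ)) • ∑ i, v i with hm
  set c : EuclideanSpace ℝ (Fin d) :=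
    gt - gradient (fun z => (1 / (n : ℝ)) * ∑ i, f i z) xt with hc
  have hmeq : m = gradient (fun z => (1 / (n : ℝ)) * ∑ i, f i z) xt1
      - gradient (fun z => (1 / (n : ℝ)) * ∑ i, f i z) xt := by
    rw [gradF, gradF, hm, ← smul_sub, ← Finset.sum_sub_distrib]
  have hrw : ∀ ω, gt + S ω v - gradient (fun z => (1 / (n : ℝ)) * ∑ i, f i z) xt1
      = (S ω v - m) + c := by
    intro ω; rw [hmeq, hc]; abel
  -- integrability
  have hint1 : Integrable (fun ω => S ω v - m) μ := (hSint v).sub (integrable_const m)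
  have hinner0 : Integrable (fun ω => (innerSL ℝ c) (S ω v - m)) μ :=
    (innerSL ℝ c).integrable_comp hint1
  have hintinner : Integrable (fun ω => (inner ℝ (S ω v - m) c : ℝ)) μ :=
    hinner0.congr (Filter.Eventually.of_forall fun ω => real_inner_comm (S ω v - m) c)
  have hzero : ∫ ω, (inner ℝ (S ω v - m) c : ℝ) ∂μ = 0 := by
    have h1 : ∫ ω, S ω v - m ∂μ = 0 := by
      rw [integral_sub (hSint v) (integrable_const m), hSunbiased v, integral_const]
      simp [hm]
    have h2 : ∫ ω, (innerSL ℝ c) (S ω v - m) ∂μ = (innerSL ℝ c) (∫ ω, S ω v - m ∂μ) :=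
      ContinuousLinearMap.integral_comp_comm _ hint1
    rw [h1] at h2
    calc ∫ ω, (inner ℝ (S ω v - m) c : ℝ) ∂μ
        = ∫ ω, (innerSL ℝ c) (S ω v - m) ∂μ :=
          integral_congr_ae (Filter.Eventually.of_forall fun ω => real_inner_comm c (S ω v - m))
      _ = (innerSL ℝ c) (0 : EuclideanSpace ℝ (Fin d)) := h2
      _ = 0 := by simp
  have hexpand : ∫ ω, ‖gt + S ω v - gradient (fun z => (1 / (n : ℝ)) * ∑ i, f i z) xt1‖ ^ 2 ∂μ
      = (∫ ω, ‖S ω v - m‖ ^ 2 ∂μ) + ‖c‖ ^ 2 := by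
    have heq : ∀ ω, ‖gt + S ω v - gradient (fun z => (1 / (n : ℝ)) * ∑ i, f i z) xt1‖ ^ 2
        = ‖S ω v - m‖ ^ 2 + (2 * (inner ℝ (S ω v - m) c : ℝ) + ‖c‖ ^ 2) := by
      intro ω
      rw [hrw ω, @norm_add_sq_real]
      ring
    calc ∫ ω, ‖gt + S ω v - gradient (fun z => (1 / (n : ℝ)) * ∑ i, f i z) xt1‖ ^ 2 ∂μ
        = ∫ ω, (‖S ω v - m‖ ^ 2 + (2 * (inner ℝ (S ω v - m) c : ℝ) + ‖c‖ ^ 2)) ∂μ := by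
          exact integral_congr_ae (Filter.Eventually.of_forall heq)
      _ = (∫ ω, ‖S ω v - m‖ ^ 2 ∂μ) + ∫ ω, (2 * (inner ℝ (S ω v - m) c : ℝ) + ‖c‖ ^ 2) ∂μ := by
          exact integral_add (hSint2 v) ((hintinner.const_mul 2).add (integrable_const _))
      _ = (∫ ω, ‖S ω v - m‖ ^ 2 ∂μ) + ‖c‖ ^ 2 := by
          rw [integral_add (hintinner.const_mul 2) (integrable_const _),
            integral_const_mul, hzero, integral_const]
          simp
  -- bound the variance term
  have hbound : ∫ ω, ‖S ω v - m‖ ^ 2 ∂μ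
      ≤ ((A - B) * Lpw ^ 2 + B * Lpm ^ 2) * ‖xt1 - xt‖ ^ 2 := by
    have h1 := hSab v
    have h2 := hsmooth xt1 xt
    have h3 := hhess xt1 xt
    rw [← hmeq] at h3
    have hAn : (A / n) * ∑ i, (1 / ((n : ℝ) * w i)) * ‖v i‖ ^ 2
        = A * ((1 / (n : ℝ)) * ∑ i, (1 / ((n : ℝ) * w i)) * ‖v i‖ ^ 2) := by
      field_simp
    calc ∫ ω, ‖S ω v - m‖ ^ 2 ∂μ
        ≤ (A / n) * ∑ i, (1 / ((n : ℝ) * w i)) * ‖v i‖ ^ 2 - B * ‖m‖ ^ 2 := h1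
      _ = (A - B) * ((1 / (n : ℝ)) * ∑ i, (1 / ((n : ℝ) * w i)) * ‖v i‖ ^ 2)
          + B * ((1 / (n : ℝ)) * ∑ i, (1 / ((n : ℝ) * w i)) * ‖v i‖ ^ 2 - ‖m‖ ^ 2) := by
          rw [hAn]; ring
      _ ≤ (A - B) * (Lpw ^ 2 * ‖xt1 - xt‖ ^ 2) + B * (Lpm ^ 2 * ‖xt1 - xt‖ ^ 2) := by
          exact add_le_add (mul_le_mul_of_nonneg_left h2 (by linarith))
            (mul_le_mul_of_nonneg_left h3 hB)
      _ = ((A - B) * Lpw ^ 2 + B * Lpm ^ 2) * ‖xt1 - xt‖ ^ 2 := by ring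
  have hfinal : ∫ ω, ‖gt + S ω v - gradient (fun z => (1 / (n : ℝ)) * ∑ i, f i z) xt1‖ ^ 2 ∂μ
      ≤ ((A - B) * Lpw ^ 2 + B * Lpm ^ 2) * ‖xt1 - xt‖ ^ 2 + ‖c‖ ^ 2 := by
    rw [hexpand]; linarith
  have hp1 : 0 ≤ 1 - p := by linarith [hp.2]
  calc (1 - p) * ∫ ω, ‖gt + S ω v
        - gradient (fun z => (1 / (n : ℝ)) * ∑ i, f i z) xt1‖ ^ 2 ∂μ
      ≤ (1 - p) * (((A - B) * Lpw ^ 2 + B * Lpm ^ 2) * ‖xt1 - xt‖ ^ 2 + ‖c‖ ^ 2) :=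
        mul_le_mul_of_nonneg_left hfinal hp1
    _ = (1 - p) * ((A - B) * Lpw ^ 2 + B * Lpm ^ 2) * ‖xt1 - xt‖ ^ 2
        + (1 - p) * ‖c‖ ^ 2 := by ring
end

section
/- Suppose f is lower bounded by f^inf, ∇f is L₋-Lipschitz, and the MARINA estimator satisfies E[‖g^{t+1} − ∇f(x^{t+1})‖² | past] ≤ (1−p)Ĺ²‖x^{t+1} − x^t‖² + (1−p)‖g^t − ∇f(x^t)‖² with Ĺ² = (A−B)L₊,w² + B L±,w². If 0 < γ ≤ (L₋ + √((1−p)/p · Ĺ²))⁻¹, then the iterates x^{t+1} = x^t − γg^t with g⁰ = ∇f(x⁰) satisfy (1/T)∑_{t=0}^{T−1} E‖∇f(x^t)‖² ≤ 2(f(x⁰) − f^inf)/(γT). -/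
open MeasureTheory


lemma fderiv_eq_inner_gradient {d : ℕ} (f : EuclideanSpace ℝ (Fin d) → ℝ)
    (hdiff : Differentiable ℝ f) (y v : EuclideanSpace ℝ (Fin d)) :
    fderiv ℝ f y v = inner ℝ (gradient f y) v := by
  have h := (hdiff y).hasGradientAt
  have h2 : fderiv ℝ f y = InnerProductSpace.toDual ℝ _ (gradient f y) :=
    (hdiff y).hasFDerivAt.unique h.hasFDerivAt
  rw [h2]; rfl

lemma smooth_ub {d : ℕ} (f : EuclideanSpace ℝ (Fin d) → ℝ)
    (hdiff : Differentiable ℝ f) (Lm : ℝ)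
    (hlip : ∀ x y, ‖gradient f x - gradient f y‖ ≤ Lm * ‖x - y‖)
    (x y : EuclideanSpace ℝ (Fin d)) :
    f y ≤ f x + inner ℝ (gradient f x) (y - x) + Lm / 2 * ‖y - x‖ ^ 2 := by
  set v := y - x with hv
  have key : ∀ z ∈ Set.Icc (0:ℝ) 1,
      f (x + z • v) ≤ f x + z * inner ℝ (gradient f x) v + Lm / 2 * z ^ 2 * ‖v‖ ^ 2 := by
    intro z hz
    refine image_le_of_deriv_right_le_deriv_boundary
      (f := fun t : ℝ => f (x + t • v))
      (B := fun t : ℝ => f x + t * inner ℝ (gradient f x) v + Lm / 2 * t ^ 2 * ‖v‖ ^ 2)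
      (f' := fun t => inner ℝ (gradient f (x + t • v)) v)
      (B' := fun t => inner ℝ (gradient f x) v + Lm * t * ‖v‖ ^ 2)
      ?_ ?_ ?_ ?_ ?_ ?_ hz
    · exact (hdiff.continuous.comp (by continuity)).continuousOn
    · intro t _
      have hc : HasDerivAt (fun t : ℝ => x + t • v) v t := by
        simpa using ((hasDerivAt_id t).smul_const v).const_add x
      have := (hdiff (x + t • v)).hasFDerivAt.comp_hasDerivAt t hc
      have heq : fderiv ℝ f (x + t • v) v = inner ℝ (gradient f (x + t • v)) v :=
        fderiv_eq_inner_gradient f hdiff _ _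
      exact (heq ▸ this).hasDerivWithinAt
    · simp
    · fun_prop
    · intro t _
      have : HasDerivAt (fun t : ℝ => f x + t * inner ℝ (gradient f x) v + Lm / 2 * t ^ 2 * ‖v‖ ^ 2)
          (inner ℝ (gradient f x) v + Lm * t * ‖v‖ ^ 2) t := by
        have h1 : HasDerivAt (fun t : ℝ => t * inner ℝ (gradient f x) v)
            (inner ℝ (gradient f x) v) t := by simpa using (hasDerivAt_id t).mul_const _
        have h2 : HasDerivAt (fun t : ℝ => Lm / 2 * t ^ 2 * ‖v‖ ^ 2) (Lm * t * ‖v‖ ^ 2) t := by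
          have := ((hasDerivAt_pow 2 t).const_mul (Lm / 2)).mul_const (‖v‖ ^ 2)
          rw [show Lm * t * ‖v‖ ^ 2 = Lm / 2 * (((2:ℕ):ℝ) * t ^ (2 - 1)) * ‖v‖ ^ 2 by
            rw [show (2:ℕ) - 1 = 1 from rfl]; push_cast; ring]
          exact this
        exact (h1.const_add (f x)).add h2
      exact this.hasDerivWithinAt
    · intro t ht
      have hip : (inner ℝ (gradient f (x + t • v)) v : ℝ) - inner ℝ (gradient f x) v
          = inner ℝ (gradient f (x + t • v) - gradient f x) v := by
        rw [inner_sub_left]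
      have hb : (inner ℝ (gradient f (x + t • v) - gradient f x) v : ℝ)
          ≤ ‖gradient f (x + t • v) - gradient f x‖ * ‖v‖ := real_inner_le_norm _ _
      have hl := hlip (x + t • v) x
      have hn : ‖x + t • v - x‖ = t * ‖v‖ := by
        rw [add_sub_cancel_left, norm_smul, Real.norm_eq_abs, abs_of_nonneg ht.1]
      rw [hn] at hl
      show (inner ℝ (gradient f (x + t • v)) v : ℝ) ≤ inner ℝ (gradient f x) v + Lm * t * ‖v‖ ^ 2
      nlinarith [norm_nonneg v, mul_le_mul_of_nonneg_right hl (norm_nonneg v)]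
  have := key 1 (by norm_num)
  simpa [hv] using this

lemma descent_lemma {d : ℕ} (f : EuclideanSpace ℝ (Fin d) → ℝ)
    (hdiff : Differentiable ℝ f) (Lm : ℝ)
    (hlip : ∀ x y, ‖gradient f x - gradient f y‖ ≤ Lm * ‖x - y‖)
    (γ : ℝ) (hγ0 : 0 < γ) (x g : EuclideanSpace ℝ (Fin d)) :
    f (x - γ • g) ≤ f x - γ / 2 * ‖gradient f x‖ ^ 2
      - (1 / (2 * γ) - Lm / 2) * ‖(x - γ • g) - x‖ ^ 2
      + γ / 2 * ‖g - gradient f x‖ ^ 2 := by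
  have h := smooth_ub f hdiff Lm hlip x (x - γ • g)
  have hy : (x - γ • g) - x = -(γ • g) := by abel
  rw [hy] at h ⊢
  have hip : (inner ℝ (gradient f x) (-(γ • g)) : ℝ) = -(γ * inner ℝ (gradient f x) g) := by
    rw [inner_neg_right, real_inner_smul_right]
  have hnrm : ‖-(γ • g)‖ = γ * ‖g‖ := by
    rw [norm_neg, norm_smul, Real.norm_eq_abs, abs_of_pos hγ0]
  have hpol : ‖g - gradient f x‖ ^ 2
      = ‖g‖ ^ 2 - 2 * inner ℝ g (gradient f x) + ‖gradient f x‖ ^ 2 := norm_sub_sq_real g _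
  have hcomm : (inner ℝ g (gradient f x) : ℝ) = inner ℝ (gradient f x) g := real_inner_comm _ _
  rw [hip, hnrm] at h
  rw [hnrm]
  have hγ' : 1 / (2 * γ) * (γ * ‖g‖) ^ 2 = γ / 2 * ‖g‖ ^ 2 := by
    field_simp
  nlinarith [h, hpol, hcomm, hγ']

lemma stepsize_lemma (Lm a γ : ℝ) (hLm : 0 ≤ Lm) (ha : 0 ≤ a) (hγ0 : 0 < γ)
    (hγ : γ ≤ (Lm + Real.sqrt a)⁻¹) : a * γ ^ 2 + Lm * γ ≤ 1 := by
  set s := Real.sqrt a with hs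
  have hs0 : 0 ≤ s := Real.sqrt_nonneg a
  have hsq : s ^ 2 = a := Real.sq_sqrt ha
  have hpos : 0 < Lm + s := by
    rcases eq_or_lt_of_le (add_nonneg hLm hs0) with h | h
    · exfalso; rw [← h] at hγ; simp at hγ; linarith
    · exact h
  have h1 : γ * (Lm + s) ≤ 1 := by
    rw [inv_eq_one_div, le_div_iff₀ hpos] at hγ; linarith
  have h2 : s * γ ≤ 1 := by nlinarith [mul_nonneg hLm hγ0.le]
  have h3 : (s * γ) * (s * γ) ≤ 1 * (s * γ) :=
    mul_le_mul_of_nonneg_right h2 (mul_nonneg hs0 hγ0.le)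
  nlinarith

/-- MARINA convergence: if `f` is lower bounded by `finf`, `∇f` is
`L₋`-Lipschitz, the iterates satisfy `x^{t+1} = x^t − γ g^t` with `g⁰ = ∇f(x⁰)` and the
estimator recursion `E‖g^{t+1} − ∇f(x^{t+1})‖² ≤ (1−p)Ĺ² E‖x^{t+1} − x^t‖²
+ (1−p)E‖g^t − ∇f(x^t)‖²` with `Ĺ² = (A−B)Lpw² + B Lpm²`, and
`0 < γ ≤ (L₋ + √((1−p)/p · Ĺ²))⁻¹`, then
`(1/T)∑_{t<T} E‖∇f(x^t)‖² ≤ 2(f(x⁰) − finf)/(γ T)`. -/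
theorem marina_convergence (d : ℕ)
    (f : EuclideanSpace ℝ (Fin d) → ℝ) (hdiff : Differentiable ℝ f)
    (finf : ℝ) (hlb : ∀ x, finf ≤ f x)
    (Lm : ℝ) (hLm : 0 ≤ Lm)
    (hlip : ∀ x y, ‖gradient f x - gradient f y‖ ≤ Lm * ‖x - y‖)
    (A B Lpw Lpm : ℝ) (hA : 0 ≤ A) (hB : 0 ≤ B) (hBA : B ≤ A)
    (hLpw : 0 ≤ Lpw) (hLpm : 0 ≤ Lpm)
    (p : ℝ) (hp : p ∈ Set.Ioc (0 : ℝ) 1)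
    (γ : ℝ) (hγ0 : 0 < γ)
    (hγ : γ ≤ (Lm + Real.sqrt ((1 - p) / p * ((A - B) * Lpw ^ 2 + B * Lpm ^ 2)))⁻¹)
    {Ω : Type*} [MeasurableSpace Ω] (μ : Measure Ω) [IsProbabilityMeasure μ]
    (x g : ℕ → Ω → EuclideanSpace ℝ (Fin d)) (x0 : EuclideanSpace ℝ (Fin d))
    (hx0 : ∀ ω, x 0 ω = x0)
    (hg0 : ∀ ω, g 0 ω = gradient f (x 0 ω))
    (hupd : ∀ t ω, x (t + 1) ω = x t ω - γ • g t ω)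
    (hintf : ∀ t, Integrable (fun ω => f (x t ω)) μ)
    (hintg : ∀ t, Integrable (fun ω => ‖g t ω - gradient f (x t ω)‖ ^ 2) μ)
    (hintx : ∀ t, Integrable (fun ω => ‖x (t + 1) ω - x t ω‖ ^ 2) μ)
    (hintgrad : ∀ t, Integrable (fun ω => ‖gradient f (x t ω)‖ ^ 2) μ)
    (hrec : ∀ t, ∫ ω, ‖g (t + 1) ω - gradient f (x (t + 1) ω)‖ ^ 2 ∂μ
      ≤ (1 - p) * ((A - B) * Lpw ^ 2 + B * Lpm ^ 2)
          * ∫ ω, ‖x (t + 1) ω - x t ω‖ ^ 2 ∂μ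
        + (1 - p) * ∫ ω, ‖g t ω - gradient f (x t ω)‖ ^ 2 ∂μ)
    (T : ℕ) (hT : 0 < T) :
    (1 / (T : ℝ)) * ∑ t ∈ Finset.range T, ∫ ω, ‖gradient f (x t ω)‖ ^ 2 ∂μ
      ≤ 2 * (f x0 - finf) / (γ * T) := by
  obtain ⟨hp0, hp1⟩ := hp
  set L2 : ℝ := (A - B) * Lpw ^ 2 + B * Lpm ^ 2 with hL2def
  have hL2 : 0 ≤ L2 := by nlinarith [sq_nonneg Lpw, sq_nonneg Lpm]
  set N : ℕ → ℝ := fun t => ∫ ω, ‖gradient f (x t ω)‖ ^ 2 ∂μ with hN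
  set Fs : ℕ → ℝ := fun t => ∫ ω, f (x t ω) ∂μ with hFs
  set G : ℕ → ℝ := fun t => ∫ ω, ‖g t ω - gradient f (x t ω)‖ ^ 2 ∂μ with hG
  set D : ℕ → ℝ := fun t => ∫ ω, ‖x (t + 1) ω - x t ω‖ ^ 2 ∂μ with hD
  set C : ℝ := 1 / (2 * γ) - Lm / 2 with hC
  clear_value N Fs G D C
  have hNnn : ∀ t, 0 ≤ N t := fun t => by
    simp only [hN]; exact integral_nonneg (fun ω => by positivity)
  have hGnn : ∀ t, 0 ≤ G t := fun t => by
    simp only [hG]; exact integral_nonneg (fun ω => by positivity)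
  have hDnn : ∀ t, 0 ≤ D t := fun t => by
    simp only [hD]; exact integral_nonneg (fun ω => by positivity)
  -- per-step expected descent
  have hstepF : ∀ t, Fs (t + 1) ≤ Fs t - γ / 2 * N t - C * D t + γ / 2 * G t := by
    intro t
    have hpt : ∀ ω, f (x (t + 1) ω) ≤ f (x t ω) - γ / 2 * ‖gradient f (x t ω)‖ ^ 2
        - C * ‖x (t + 1) ω - x t ω‖ ^ 2 + γ / 2 * ‖g t ω - gradient f (x t ω)‖ ^ 2 := by
      intro ω
      rw [hupd t ω, hC]
      exact descent_lemma f hdiff Lm hlip γ hγ0 (x t ω) (g t ω)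
    have hint2 : Integrable (fun ω => f (x t ω) - γ / 2 * ‖gradient f (x t ω)‖ ^ 2
        - C * ‖x (t + 1) ω - x t ω‖ ^ 2 + γ / 2 * ‖g t ω - gradient f (x t ω)‖ ^ 2) μ :=
      (((hintf t).sub ((hintgrad t).const_mul (γ / 2))).sub
        ((hintx t).const_mul C)).add ((hintg t).const_mul (γ / 2))
    simp only [hFs, hN, hG, hD]
    calc (∫ ω, f (x (t + 1) ω) ∂μ) ≤ ∫ ω, (f (x t ω) - γ / 2 * ‖gradient f (x t ω)‖ ^ 2
          - C * ‖x (t + 1) ω - x t ω‖ ^ 2 + γ / 2 * ‖g t ω - gradient f (x t ω)‖ ^ 2) ∂μ :=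
        integral_mono (hintf (t + 1)) hint2 hpt
      _ = (∫ ω, f (x t ω) ∂μ) - γ / 2 * (∫ ω, ‖gradient f (x t ω)‖ ^ 2 ∂μ)
          - C * (∫ ω, ‖x (t + 1) ω - x t ω‖ ^ 2 ∂μ)
          + γ / 2 * (∫ ω, ‖g t ω - gradient f (x t ω)‖ ^ 2 ∂μ) := by
        have i2 : Integrable (fun ω => f (x t ω)
            - γ / 2 * ‖gradient f (x t ω)‖ ^ 2) μ :=
          (hintf t).sub ((hintgrad t).const_mul _)
        have i3 : Integrable (fun ω => f (x t ω) - γ / 2 * ‖gradient f (x t ω)‖ ^ 2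
            - C * ‖x (t + 1) ω - x t ω‖ ^ 2) μ := i2.sub ((hintx t).const_mul _)
        rw [integral_add i3 ((hintg t).const_mul _),
          integral_sub i2 ((hintx t).const_mul _),
          integral_sub (hintf t) ((hintgrad t).const_mul _),
          integral_const_mul, integral_const_mul, integral_const_mul]
  -- stepsize condition
  have hcoef : γ / (2 * p) * (1 - p) * L2 ≤ C := by
    have key := stepsize_lemma Lm ((1 - p) / p * L2) γ hLm
      (mul_nonneg (div_nonneg (by linarith) hp0.le) hL2) hγ0 hγ
    rw [← sub_nonneg]
    have heq : C - γ / (2 * p) * (1 - p) * L2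
        = (1 - ((1 - p) / p * L2 * γ ^ 2 + Lm * γ)) / (2 * γ) := by
      rw [hC]; field_simp; ring
    rw [heq]
    apply div_nonneg (by linarith) (by linarith)
  -- Lyapunov
  set Φ : ℕ → ℝ := fun t => Fs t - finf + γ / (2 * p) * G t with hΦ
  clear_value Φ
  have hstep : ∀ t, γ / 2 * N t ≤ Φ t - Φ (t + 1) := by
    intro t
    have h1 := hstepF t
    have h2 : G (t + 1) ≤ (1 - p) * L2 * D t + (1 - p) * G t := by
      simp only [hG, hD]; exact hrec t
    have hcp : 0 ≤ γ / (2 * p) := div_nonneg hγ0.le (by linarith)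
    have h2' : γ / (2 * p) * G (t + 1)
        ≤ γ / (2 * p) * ((1 - p) * L2 * D t + (1 - p) * G t) := by
      apply mul_le_mul_of_nonneg_left _ hcp
      exact h2
    have hCd : γ / (2 * p) * (1 - p) * L2 * D t ≤ C * D t :=
      mul_le_mul_of_nonneg_right hcoef (hDnn t)
    have hGid : γ / (2 * p) * ((1 - p) * G t) = γ / (2 * p) * G t - γ / 2 * G t := by
      field_simp
    simp only [hΦ]
    linarith [h2', hCd, hGid, h1]
  -- telescoping
  have htel : ∑ t ∈ Finset.range T, γ / 2 * N t ≤ Φ 0 - Φ T := by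
    have := Finset.sum_le_sum (fun t (_ : t ∈ Finset.range T) => hstep t)
    calc ∑ t ∈ Finset.range T, γ / 2 * N t ≤ ∑ t ∈ Finset.range T, (Φ t - Φ (t + 1)) := this
      _ = Φ 0 - Φ T := Finset.sum_range_sub' Φ T
  have hΦT : 0 ≤ Φ T := by
    have h1 : finf ≤ Fs T := by
      have h : ∫ (_ : Ω), finf ∂μ ≤ ∫ ω, f (x T ω) ∂μ :=
        integral_mono (integrable_const finf) (hintf T) (fun ω => hlb _)
      simp only [hFs]
      simpa using h
    have h2 : 0 ≤ γ / (2 * p) * G T :=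
      mul_nonneg (div_nonneg hγ0.le (by linarith)) (hGnn T)
    simp only [hΦ]; linarith
  have hΦ0 : Φ 0 = f x0 - finf := by
    have hF0 : Fs 0 = f x0 := by
      simp only [hFs]
      have : (fun ω => f (x 0 ω)) = fun _ : Ω => f x0 := by funext ω; rw [hx0]
      rw [this, integral_const]; simp
    have hG0 : G 0 = 0 := by
      simp only [hG]
      have : (fun ω => ‖g 0 ω - gradient f (x 0 ω)‖ ^ 2) = fun _ : Ω => (0 : ℝ) := by
        funext ω; rw [hg0]; simp
      rw [this]; simp
    simp only [hΦ, hF0, hG0]; ring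
  have hsum : ∑ t ∈ Finset.range T, N t ≤ 2 * (f x0 - finf) / γ := by
    have h1 : γ / 2 * ∑ t ∈ Finset.range T, N t ≤ f x0 - finf := by
      rw [Finset.mul_sum]; calc ∑ t ∈ Finset.range T, γ / 2 * N t ≤ Φ 0 - Φ T := htel
        _ ≤ f x0 - finf := by rw [hΦ0]; linarith
    rw [le_div_iff₀ hγ0]
    calc (∑ t ∈ Finset.range T, N t) * γ = 2 * (γ / 2 * ∑ t ∈ Finset.range T, N t) := by ring
      _ ≤ 2 * (f x0 - finf) := by linarith
  have hTpos : (0 : ℝ) < T := by exact_mod_cast hT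
  calc (1 / (T : ℝ)) * ∑ t ∈ Finset.range T, N t
      ≤ (1 / (T : ℝ)) * (2 * (f x0 - finf) / γ) :=
        mul_le_mul_of_nonneg_left hsum (by positivity)
    _ = 2 * (f x0 - finf) / (γ * T) := by
        rw [one_div, inv_mul_eq_div, div_div]
end
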